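/- arXiv:2109.04586 — 4 statements merged into one kernel-verified Lean document; each statement's English description precedes it below -/
import Mathlib

section
/- Let N ≥ 2 be a fixed integer and let C be the lacunary C-matrix associated with N. For every ε > 0 there exists a nonzero square-summable sequence x = (x_n)_{n≥0} of nonnegative reals such that ‖Cx‖₂ ≥ (√(N−1)/(√N − 1) − ε)‖x‖₂. Consequently sup_{x≠0, x∈ℓ²} ‖Cx‖₂/‖x‖₂ ≥ √(N−1)/(√N − 1). -/
/-- The lacunary coefficient sequence: `a_n = N^{-j/2}` if `n = N^j` for some
integer `j ≥ 1`, and `a_n = 0` otherwise. (For `N ≥ 2` at most one index `j`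
contributes to the sum below, so the `tsum` picks out exactly that value.) -/
noncomputable def lacCoef (N : ℕ) (n : ℕ) : ℝ :=
  ∑' j : ℕ, if n = N ^ (j + 1) then (Real.sqrt N ^ (j + 1))⁻¹ else 0

/-- The lacunary `C`-matrix applied to a sequence: `(Cx)_n = a_n ∑_{j=0}^n x_j`. -/
noncomputable def lacC (N : ℕ) (x : ℕ → ℝ) (n : ℕ) : ℝ :=
  lacCoef N n * ∑ j ∈ Finset.range (n + 1), x j

section aux
variable {N : ℕ}

lemma lac_one_lt_sqrt (hN : 2 ≤ N) : 1 < Real.sqrt N := by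
  rw [show (1:ℝ) = Real.sqrt 1 by simp]
  exact Real.sqrt_lt_sqrt (by norm_num) (by exact_mod_cast lt_of_lt_of_le one_lt_two hN)

lemma lac_sq_sqrt (N : ℕ) : Real.sqrt N ^ 2 = N := Real.sq_sqrt (by positivity)

lemma lacCoef_pow (hN : 2 ≤ N) {m : ℕ} (hm : 1 ≤ m) :
    lacCoef N (N ^ m) = (Real.sqrt N ^ m)⁻¹ := by
  obtain ⟨j, rfl⟩ := Nat.exists_eq_add_of_le hm
  rw [lacCoef, tsum_eq_single j]
  · simp [add_comm 1 j]
  · intro k hk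
    rw [if_neg]
    intro h
    have := Nat.pow_right_injective hN h.symm
    omega

lemma lacCoef_eq_zero {n : ℕ} (h : ∀ j : ℕ, n ≠ N ^ (j + 1)) : lacCoef N n = 0 := by
  rw [lacCoef]
  convert tsum_zero with j
  exact if_neg (h j)

lemma lac_log_eq {k i : ℕ} (hi : i ∈ Finset.Ico (N ^ k) (N ^ (k + 1))) :
    Nat.log N i = k := by
  rw [Finset.mem_Ico] at hi
  exact Nat.log_eq_of_pow_le_of_lt_pow hi.1 hi.2

lemma lac_block_decomp (hN : 2 ≤ N) (f : ℕ → ℝ) (J : ℕ) :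
    ∑ i ∈ Finset.Ico 1 (N ^ J), f i
      = ∑ k ∈ Finset.range J, ∑ i ∈ Finset.Ico (N ^ k) (N ^ (k + 1)), f i := by
  induction J with
  | zero => simp
  | succ J ih =>
      rw [Finset.sum_range_succ, ← ih,
        Finset.sum_Ico_consecutive f (Nat.one_le_pow J N (by omega))
          (Nat.pow_le_pow_right (by omega) (Nat.le_succ J))]

lemma lac_sum_pow_log (hN : 2 ≤ N) (c : ℝ) (hc : c ≠ 0) (J : ℕ) :
    ∑ i ∈ Finset.Ico 1 (N ^ J), (c ^ Nat.log N i)⁻¹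
      = ((N:ℝ) - 1) * ∑ k ∈ Finset.range J, ((N:ℝ) / c) ^ k := by
  rw [lac_block_decomp hN, Finset.mul_sum]
  refine Finset.sum_congr rfl fun k _ => ?_
  rw [Finset.sum_congr rfl fun i hi => by rw [lac_log_eq hi]]
  rw [Finset.sum_const, Nat.card_Ico, nsmul_eq_mul]
  have h1 : (N:ℕ) ^ k ≤ N ^ (k+1) := Nat.pow_le_pow_right (by omega) (Nat.le_succ k)
  have : ((N ^ (k+1) - N ^ k : ℕ) : ℝ) = ((N:ℝ) - 1) * (N:ℝ)^k := by
    push_cast [h1]; ring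
  rw [this, div_pow]
  ring
end aux

lemma lac_geom_tail {r : ℝ} (h0 : 0 ≤ r) (h1 : r < 1) (a T : ℕ) :
    ∑ m ∈ Finset.Icc a T, r ^ m ≤ r ^ a / (1 - r) := by
  have hr1 : r ≠ 1 := ne_of_lt h1
  have h1r : 0 < 1 - r := by linarith
  rw [show Finset.Icc a T = Finset.Ico a (T+1) by rfl, Finset.sum_Ico_eq_sum_range]
  calc ∑ k ∈ Finset.range (T + 1 - a), r ^ (a + k)
      = r ^ a * ∑ k ∈ Finset.range (T + 1 - a), r ^ k := by
        rw [Finset.mul_sum]; exact Finset.sum_congr rfl fun k _ => by rw [pow_add]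
    _ ≤ r ^ a * (1 / (1 - r)) := by
        refine mul_le_mul_of_nonneg_left ?_ (by positivity)
        rw [geom_sum_eq hr1, show (r ^ (T+1-a) - 1) / (r - 1) = (1 - r ^ (T+1-a)) / (1 - r) by
          rw [← neg_div_neg_eq]; ring_nf]
        have h2 : 0 ≤ r ^ (T + 1 - a) := by positivity
        rw [div_le_div_iff₀ h1r h1r]
        nlinarith
    _ = r ^ a / (1 - r) := by ring

noncomputable def lacM2 (N : ℕ) : ℝ :=
  (2 + ((N:ℝ) - 1) / (Real.sqrt N - 1)) * (Real.sqrt N / (Real.sqrt N - 1))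

lemma lac_upper {N : ℕ} (hN : 2 ≤ N) (x : ℕ → ℝ) (hx : Summable (fun n => x n ^ 2)) :
    (∑' n, lacC N x n ^ 2) ≤ lacM2 N * ∑' n, x n ^ 2 := by
  have hσ : 1 < Real.sqrt N := lac_one_lt_sqrt hN
  set σ := Real.sqrt N with hσdef
  have hσ0 : 0 < σ := lt_trans one_pos hσ
  have hσ1 : 0 < σ - 1 := by linarith
  have hσ2 : σ ^ 2 = N := lac_sq_sqrt N
  have hNR : (2:ℝ) ≤ N := by exact_mod_cast hN
  set C1 : ℝ := 2 + ((N:ℝ) - 1) / (σ - 1) with hC1def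
  have hdivpos : (0:ℝ) ≤ ((N:ℝ) - 1) / (σ - 1) :=
    div_nonneg (by linarith) (by linarith)
  have hC1 : (0:ℝ) ≤ C1 := by rw [hC1def]; linarith
  have hNσ : (N:ℝ) / σ = σ := by rw [← hσ2]; field_simp
  have htsx : (0:ℝ) ≤ ∑' n, x n ^ 2 := tsum_nonneg fun n => sq_nonneg _
  have hM2 : (0:ℝ) ≤ lacM2 N := by
    rw [lacM2]
    have h2 : (0:ℝ) ≤ σ / (σ - 1) := div_nonneg hσ0.le (by linarith)
    nlinarith
  apply tsum_le_of_sum_le' (by positivity)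
  intro F
  classical
  set T := F.sup (Nat.log N) with hT
  -- Step A : reduce to powers of N
  have stepA : ∑ n ∈ F, lacC N x n ^ 2
      ≤ ∑ m ∈ Finset.Icc 1 T, lacC N x (N ^ m) ^ 2 := by
    rw [← Finset.sum_filter_ne_zero F (f := fun n => lacC N x n ^ 2)]
    have hsub : F.filter (fun n => lacC N x n ^ 2 ≠ 0)
        ⊆ (Finset.Icc 1 T).image (N ^ ·) := by
      intro n hn
      rw [Finset.mem_filter] at hn
      obtain ⟨hnF, hne⟩ := hn
      have hcoef : lacCoef N n ≠ 0 := by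
        intro h0
        apply hne
        rw [lacC, h0, zero_mul]; norm_num
      have : ∃ j : ℕ, n = N ^ (j + 1) := by
        by_contra h
        push_neg at h
        exact hcoef (lacCoef_eq_zero h)
      obtain ⟨j, rfl⟩ := this
      rw [Finset.mem_image]
      refine ⟨j + 1, ?_, rfl⟩
      rw [Finset.mem_Icc]
      constructor
      · omega
      · have := Finset.le_sup (f := Nat.log N) hnF
        rwa [Nat.log_pow (by omega : 1 < N)] at this
    calc ∑ n ∈ F.filter (fun n => lacC N x n ^ 2 ≠ 0), lacC N x n ^ 2
        ≤ ∑ n ∈ (Finset.Icc 1 T).image (N ^ ·), lacC N x n ^ 2 :=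
          Finset.sum_le_sum_of_subset_of_nonneg hsub (fun i _ _ => sq_nonneg _)
      _ = ∑ m ∈ Finset.Icc 1 T, lacC N x (N ^ m) ^ 2 := by
          rw [Finset.sum_image]
          intro a _ b _ hab
          exact Nat.pow_right_injective hN hab
  -- notation for blocks
  set L : ℕ → ℕ := Nat.log N with hL
  set Q : ℕ → ℝ := fun m => ∑ i ∈ Finset.range (N ^ m + 1), σ ^ L i * x i ^ 2 with hQ
  -- Step B : each power term bounded via Cauchy-Schwarz
  have stepB : ∀ m, 1 ≤ m → lacC N x (N ^ m) ^ 2 ≤ C1 * ((σ⁻¹) ^ m * Q m) := by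
    intro m hm
    have hσm : (0:ℝ) < σ ^ m := by positivity
    rw [lacC, lacCoef_pow hN hm]
    set S : ℝ := ∑ i ∈ Finset.range (N ^ m + 1), x i with hS
    -- Cauchy-Schwarz
    set τ : ℝ := Real.sqrt σ with hτ
    have hτ0 : 0 < τ := Real.sqrt_pos.mpr hσ0
    have hτ2 : τ ^ 2 = σ := Real.sq_sqrt hσ0.le
    have hCS : S ^ 2 ≤ (∑ i ∈ Finset.range (N ^ m + 1), (σ ^ L i)⁻¹) * Q m := by
      have h1 : S = ∑ i ∈ Finset.range (N ^ m + 1), ((τ ^ L i)⁻¹) * (τ ^ L i * x i) := by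
        refine Finset.sum_congr rfl fun i _ => ?_
        field_simp
      have h2 := Finset.sum_mul_sq_le_sq_mul_sq (Finset.range (N ^ m + 1))
        (fun i => (τ ^ L i)⁻¹) (fun i => τ ^ L i * x i)
      rw [h1]
      refine le_trans h2 (le_of_eq ?_)
      have hτσ : ∀ l : ℕ, (τ ^ l) ^ 2 = σ ^ l := fun l => by
        rw [← pow_mul, mul_comm, pow_mul, hτ2]
      congr 1
      · refine Finset.sum_congr rfl fun i _ => ?_
        rw [inv_pow, hτσ]
      · refine Finset.sum_congr rfl fun i _ => ?_
        rw [mul_pow, hτσ]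
    -- weight sum bound
    have hW : ∑ i ∈ Finset.range (N ^ m + 1), (σ ^ L i)⁻¹ ≤ C1 * σ ^ m := by
      have hpos : 0 < N ^ m := Nat.pow_pos (by omega)
      rw [Finset.sum_range_succ, Finset.range_eq_Ico,
        Finset.sum_eq_sum_Ico_succ_bot hpos]
      have h0 : (σ ^ L 0)⁻¹ = 1 := by
        simp [hL, Nat.log_zero_right]
      have hm' : (σ ^ L (N ^ m))⁻¹ ≤ 1 := by
        rw [hL, Nat.log_pow (by omega : 1 < N)]
        rw [inv_le_one_iff₀]
        right; exact one_le_pow₀ hσ.le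
      have hmid : ∑ i ∈ Finset.Ico (0 + 1) (N ^ m), (σ ^ L i)⁻¹
          ≤ ((N:ℝ) - 1) / (σ - 1) * σ ^ m := by
        rw [show (0+1 : ℕ) = 1 by rfl, hL, lac_sum_pow_log hN σ (ne_of_gt hσ0) m]
        rw [Finset.sum_congr rfl fun k _ => by rw [hNσ]]
        rw [geom_sum_eq (ne_of_gt hσ), div_eq_mul_inv, div_eq_mul_inv]
        have hσm1 : σ ^ m - 1 ≤ σ ^ m := by linarith
        have hN1 : (0:ℝ) ≤ (N:ℝ) - 1 := by linarith
        have hinv : (0:ℝ) < (σ - 1)⁻¹ := by positivity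
        calc ((N:ℝ) - 1) * ((σ ^ m - 1) * (σ - 1)⁻¹)
            ≤ ((N:ℝ) - 1) * (σ ^ m * (σ - 1)⁻¹) := by nlinarith
          _ = ((N:ℝ) - 1) * (σ - 1)⁻¹ * σ ^ m := by ring
      have hσm1 : (1:ℝ) ≤ σ ^ m := one_le_pow₀ hσ.le
      rw [h0]
      calc 1 + ∑ i ∈ Finset.Ico (0+1) (N ^ m), (σ ^ L i)⁻¹ + (σ ^ L (N ^ m))⁻¹
          ≤ 1 + ((N:ℝ) - 1) / (σ - 1) * σ ^ m + 1 := by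
            gcongr
        _ ≤ C1 * σ ^ m := by
            rw [hC1def]
            nlinarith
    -- combine
    have hσmN : ((σ ^ m)⁻¹) ^ 2 = (σ⁻¹) ^ m * (σ⁻¹) ^ m := by
      rw [← inv_pow, ← pow_add, ← pow_mul]; ring_nf
    have hQm : 0 ≤ Q m := by
      apply Finset.sum_nonneg; intro i _; positivity
    calc ((σ ^ m)⁻¹ * S) ^ 2 = ((σ ^ m)⁻¹) ^ 2 * S ^ 2 := by ring
      _ ≤ ((σ ^ m)⁻¹) ^ 2 * ((∑ i ∈ Finset.range (N ^ m + 1), (σ ^ L i)⁻¹) * Q m) := by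
          have : (0:ℝ) ≤ ((σ ^ m)⁻¹) ^ 2 := by positivity
          exact mul_le_mul_of_nonneg_left hCS this
      _ ≤ ((σ ^ m)⁻¹) ^ 2 * ((C1 * σ ^ m) * Q m) := by
          have : (0:ℝ) ≤ ((σ ^ m)⁻¹) ^ 2 := by positivity
          exact mul_le_mul_of_nonneg_left (mul_le_mul_of_nonneg_right hW hQm) this
      _ = C1 * ((σ⁻¹) ^ m * Q m) * ((σ ^ m)⁻¹ * σ ^ m) := by
          rw [hσmN]; ring
      _ = C1 * ((σ⁻¹) ^ m * Q m) := by
          rw [inv_mul_cancel₀ (ne_of_gt hσm), mul_one]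
  -- Step C : swap the double sum and use geometric tails
  have hr0 : (0:ℝ) ≤ σ⁻¹ := by positivity
  have hr1 : σ⁻¹ < 1 := by
    rw [inv_lt_one_iff₀]; right; exact hσ
  have h1r : 1 - σ⁻¹ = (σ - 1) / σ := by field_simp
  set R := N ^ T + 1 with hR
  have stepC : ∑ m ∈ Finset.Icc 1 T, (σ⁻¹) ^ m * Q m
      ≤ (σ / (σ - 1)) * ∑' n, x n ^ 2 := by
    have hext : ∀ m ∈ Finset.Icc 1 T, (σ⁻¹) ^ m * Q m
        = ∑ i ∈ Finset.range R, (if i ≤ N ^ m then (σ⁻¹) ^ m * (σ ^ L i * x i ^ 2) else 0) := by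
      intro m hm
      rw [Finset.mem_Icc] at hm
      have hmT : N ^ m + 1 ≤ R := by
        rw [hR]
        have := Nat.pow_le_pow_right (show 1 ≤ N by omega) hm.2
        omega
      have hfil : (Finset.range R).filter (fun i => i ≤ N ^ m) = Finset.range (N ^ m + 1) := by
        ext i
        simp only [Finset.mem_filter, Finset.mem_range]
        omega
      rw [← Finset.sum_filter, hfil, hQ, Finset.mul_sum]
    calc ∑ m ∈ Finset.Icc 1 T, (σ⁻¹) ^ m * Q m
        = ∑ m ∈ Finset.Icc 1 T, ∑ i ∈ Finset.range R,
            (if i ≤ N ^ m then (σ⁻¹) ^ m * (σ ^ L i * x i ^ 2) else 0) :=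
          Finset.sum_congr rfl hext
      _ = ∑ i ∈ Finset.range R, ∑ m ∈ Finset.Icc 1 T,
            (if i ≤ N ^ m then (σ⁻¹) ^ m * (σ ^ L i * x i ^ 2) else 0) := Finset.sum_comm
      _ ≤ ∑ i ∈ Finset.range R, (σ / (σ - 1)) * x i ^ 2 := by
          refine Finset.sum_le_sum fun i _ => ?_
          have hv : (0:ℝ) ≤ σ ^ L i * x i ^ 2 := by positivity
          calc ∑ m ∈ Finset.Icc 1 T, (if i ≤ N ^ m then (σ⁻¹) ^ m * (σ ^ L i * x i ^ 2) else 0)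
              ≤ ∑ m ∈ Finset.Icc 1 T, (if L i ≤ m then (σ⁻¹) ^ m else 0) * (σ ^ L i * x i ^ 2) := by
                refine Finset.sum_le_sum fun m _ => ?_
                by_cases hc : i ≤ N ^ m
                · rw [if_pos hc, if_pos]
                  by_cases hi0 : i = 0
                  · subst hi0; simp [hL]
                  · have h1 : N ^ L i ≤ N ^ m := le_trans (Nat.pow_log_le_self N hi0) hc
                    exact (Nat.pow_le_pow_iff_right (by omega : 1 < N)).mp h1
                · rw [if_neg hc]
                  have : (0:ℝ) ≤ (if L i ≤ m then (σ⁻¹) ^ m else 0) := by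
                    split <;> positivity
                  exact mul_nonneg this hv
            _ = (∑ m ∈ (Finset.Icc 1 T).filter (fun m => L i ≤ m), (σ⁻¹) ^ m)
                  * (σ ^ L i * x i ^ 2) := by
                rw [Finset.sum_filter, Finset.sum_mul]
            _ ≤ ((σ⁻¹) ^ L i / (1 - σ⁻¹)) * (σ ^ L i * x i ^ 2) := by
                refine mul_le_mul_of_nonneg_right ?_ hv
                refine le_trans (Finset.sum_le_sum_of_subset_of_nonneg ?_
                  fun m _ _ => by positivity) (lac_geom_tail hr0 hr1 (L i) T)
                intro m hm
                rw [Finset.mem_filter, Finset.mem_Icc] at hm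
                rw [Finset.mem_Icc]
                omega
            _ = (σ / (σ - 1)) * x i ^ 2 := by
                rw [h1r, inv_pow, div_div_eq_mul_div]
                have hσl : (0:ℝ) < σ ^ L i := by positivity
                field_simp
      _ = (σ / (σ - 1)) * ∑ i ∈ Finset.range R, x i ^ 2 := by rw [Finset.mul_sum]
      _ ≤ (σ / (σ - 1)) * ∑' n, x n ^ 2 := by
          refine mul_le_mul_of_nonneg_left ?_ (div_nonneg hσ0.le (by linarith))
          exact Summable.sum_le_tsum _ (fun i _ => sq_nonneg _) hx
  -- assemble
  calc ∑ n ∈ F, lacC N x n ^ 2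
      ≤ ∑ m ∈ Finset.Icc 1 T, lacC N x (N ^ m) ^ 2 := stepA
    _ ≤ ∑ m ∈ Finset.Icc 1 T, C1 * ((σ⁻¹) ^ m * Q m) := by
        refine Finset.sum_le_sum fun m hm => ?_
        rw [Finset.mem_Icc] at hm
        exact stepB m hm.1
    _ = C1 * ∑ m ∈ Finset.Icc 1 T, (σ⁻¹) ^ m * Q m := by rw [Finset.mul_sum]
    _ ≤ C1 * ((σ / (σ - 1)) * ∑' n, x n ^ 2) := mul_le_mul_of_nonneg_left stepC hC1
    _ = lacM2 N * ∑' n, x n ^ 2 := by rw [lacM2, hC1def]; ring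

set_option maxHeartbeats 2000000 in
lemma lac_lower {N : ℕ} (hN : 2 ≤ N) {ε : ℝ} (hε : 0 < ε) :
    ∃ x : ℕ → ℝ, (∀ n, 0 ≤ x n) ∧ x ≠ 0 ∧ Summable (fun n => (x n) ^ 2) ∧
      Real.sqrt (∑' n : ℕ, (lacC N x n) ^ 2) ≥
        (Real.sqrt ((N : ℝ) - 1) / (Real.sqrt (N : ℝ) - 1) - ε) *
          Real.sqrt (∑' n : ℕ, (x n) ^ 2) := by
  classical
  have hσ : 1 < Real.sqrt N := lac_one_lt_sqrt hN
  set σ := Real.sqrt N with hσdef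
  have hσ0 : 0 < σ := lt_trans one_pos hσ
  have hσ1 : 0 < σ - 1 := by linarith
  have hσ2 : σ ^ 2 = N := lac_sq_sqrt N
  have hNR : (2:ℝ) ≤ N := by exact_mod_cast hN
  have hN1 : (0:ℝ) < (N:ℝ) - 1 := by linarith
  have hσ14 : (7:ℝ)/5 ≤ σ := by
    by_contra hcon
    push_neg at hcon
    nlinarith [hσ2, hNR, hσ0]
  have hNσ : (N:ℝ) / σ = σ := by rw [← hσ2]; field_simp
  set L : ℝ := Real.sqrt ((N:ℝ) - 1) / (σ - 1) with hLdef
  have hL0 : 0 < L := div_pos (Real.sqrt_pos.mpr hN1) hσ1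
  -- choose J
  obtain ⟨J, hJ6, hJR⟩ : ∃ J : ℕ, 6 ≤ J ∧ 5 * L / ε ≤ (J:ℝ) := by
    refine ⟨max 6 (⌈5 * L / ε⌉₊ + 1), le_max_left _ _, ?_⟩
    have h1 : (5 * L / ε) ≤ (⌈5 * L / ε⌉₊ : ℝ) := Nat.le_ceil _
    have h2 : (⌈5 * L / ε⌉₊ : ℝ) ≤ ((max 6 (⌈5 * L / ε⌉₊ + 1) : ℕ) : ℝ) := by
      have : ⌈5 * L / ε⌉₊ ≤ max 6 (⌈5 * L / ε⌉₊ + 1) :=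
        le_trans (Nat.le_succ _) (le_max_right _ _)
      exact_mod_cast this
    linarith
  have hJ5 : (5:ℝ) ≤ (J:ℝ) - 1 := by
    have : (6:ℝ) ≤ (J:ℝ) := by exact_mod_cast hJ6
    linarith
  -- the witness sequence
  set x : ℕ → ℝ := fun n => if 1 ≤ n ∧ n < N ^ J then (σ ^ Nat.log N n)⁻¹ else 0 with hx
  have hx0 : ∀ n, 0 ≤ x n := by
    intro n; rw [hx]; dsimp only
    split
    · positivity
    · exact le_refl 0
  have hxsupp : ∀ n ∉ Finset.range (N ^ J), x n = 0 := by
    intro n hn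
    rw [Finset.mem_range, not_lt] at hn
    rw [hx]; dsimp only
    rw [if_neg]; omega
  have hxsum : Summable (fun n => x n ^ 2) :=
    summable_of_ne_finset_zero (s := Finset.range (N ^ J))
      (fun n hn => by rw [hxsupp n hn]; norm_num)
  have hNJpos : 1 < N ^ J := by
    calc 1 < 2 ^ 1 := by norm_num
    _ ≤ N ^ J := Nat.pow_le_pow_left hN 1 |>.trans' (by norm_num) |>.trans
        (Nat.pow_le_pow_right (by omega) (by omega))
  have hx1 : x 1 = 1 := by
    rw [hx]; dsimp only
    rw [if_pos ⟨le_refl 1, hNJpos⟩, Nat.log_one_right, pow_zero, inv_one]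
  have hxne : x ≠ 0 := by
    intro h
    have : x 1 = 0 := by rw [h]; rfl
    rw [hx1] at this; norm_num at this
  -- value of x on the inner range
  have hxval : ∀ i ∈ Finset.Ico 1 (N ^ J), x i = (σ ^ Nat.log N i)⁻¹ := by
    intro i hi
    rw [Finset.mem_Ico] at hi
    rw [hx]; dsimp only; rw [if_pos ⟨hi.1, hi.2⟩]
  -- ‖x‖² = (N-1) * J
  have htsumx : (∑' n, x n ^ 2) = ((N:ℝ) - 1) * J := by
    rw [tsum_eq_sum (s := Finset.range (N ^ J))
      (fun n hn => by rw [hxsupp n hn]; norm_num)]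
    rw [Finset.range_eq_Ico, Finset.sum_eq_sum_Ico_succ_bot (by omega : 0 < N ^ J)]
    have hx0' : x 0 = 0 := by rw [hx]; dsimp only; rw [if_neg]; omega
    rw [hx0']
    have : ∑ i ∈ Finset.Ico (0+1) (N ^ J), x i ^ 2
        = ∑ i ∈ Finset.Ico 1 (N ^ J), (((N:ℝ)) ^ Nat.log N i)⁻¹ := by
      refine Finset.sum_congr rfl fun i hi => ?_
      rw [hxval i hi, inv_pow, ← pow_mul, mul_comm (Nat.log N i) 2, pow_mul, hσ2]
    rw [this, lac_sum_pow_log hN (N:ℝ) (by positivity) J]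
    rw [Finset.sum_congr rfl fun k _ => by rw [div_self (by positivity : (N:ℝ) ≠ 0)]]
    simp
  -- partial sums lower bound
  have hSlow : ∀ m, 1 ≤ m → m ≤ J →
      ((N:ℝ) - 1) * ((σ ^ m - 1) / (σ - 1)) ≤ ∑ i ∈ Finset.range (N ^ m + 1), x i := by
    intro m hm1 hmJ
    have hsub : Finset.Ico 1 (N ^ m) ⊆ Finset.range (N ^ m + 1) := by
      intro i hi
      rw [Finset.mem_Ico] at hi
      rw [Finset.mem_range]; omega
    have h1 : ∑ i ∈ Finset.Ico 1 (N ^ m), x i ≤ ∑ i ∈ Finset.range (N ^ m + 1), x i :=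
      Finset.sum_le_sum_of_subset_of_nonneg hsub (fun i _ _ => hx0 i)
    have h2 : ∑ i ∈ Finset.Ico 1 (N ^ m), x i
        = ∑ i ∈ Finset.Ico 1 (N ^ m), (σ ^ Nat.log N i)⁻¹ := by
      refine Finset.sum_congr rfl fun i hi => ?_
      rw [Finset.mem_Ico] at hi
      refine hxval i ?_
      rw [Finset.mem_Ico]
      refine ⟨hi.1, lt_of_lt_of_le hi.2 (Nat.pow_le_pow_right (by omega) hmJ)⟩
    have h3 : ∑ i ∈ Finset.Ico 1 (N ^ m), x i = ((N:ℝ) - 1) * ((σ ^ m - 1) / (σ - 1)) := by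
      rw [h2, lac_sum_pow_log hN σ (ne_of_gt hσ0) m,
        Finset.sum_congr rfl fun k _ => by rw [hNσ], geom_sum_eq (ne_of_gt hσ)]
    linarith
  -- total sum bound
  set Tot : ℝ := ∑ i ∈ Finset.range (N ^ J), x i with hTot
  have hTot0 : 0 ≤ Tot := Finset.sum_nonneg fun i _ => hx0 i
  have hSle : ∀ n : ℕ, ∑ i ∈ Finset.range (n + 1), x i ≤ Tot := by
    intro n
    have hsub : Finset.range (n+1) ⊆ Finset.range (max (n+1) (N ^ J)) := by
      intro i hi; rw [Finset.mem_range] at *; omega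
    have h1 : ∑ i ∈ Finset.range (n + 1), x i ≤ ∑ i ∈ Finset.range (max (n+1) (N ^ J)), x i :=
      Finset.sum_le_sum_of_subset_of_nonneg hsub fun i _ _ => hx0 i
    have h2 : Tot = ∑ i ∈ Finset.range (max (n+1) (N ^ J)), x i := by
      refine Finset.sum_subset (fun i hi => ?_) (fun i _ hni => hxsupp i hni)
      rw [Finset.mem_range] at *; omega
    linarith
  have hS0 : ∀ n : ℕ, 0 ≤ ∑ i ∈ Finset.range (n + 1), x i :=
    fun n => Finset.sum_nonneg fun i _ => hx0 i
  -- summability of (lacC x)²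
  set f : ℕ → ℝ := fun n => lacC N x n ^ 2 with hf
  set g : ℕ → ℕ := fun j => N ^ (j + 1) with hg
  have hginj : Function.Injective g := by
    intro a b hab
    have := Nat.pow_right_injective hN hab
    omega
  have hgsupp : ∀ n ∉ Set.range g, f n = 0 := by
    intro n hn
    have hz : ∀ j : ℕ, n ≠ N ^ (j + 1) := fun j hj => hn ⟨j, hj.symm⟩
    rw [hf]; dsimp only
    rw [lacC, lacCoef_eq_zero hz, zero_mul]; norm_num
  have hfg : ∀ j : ℕ, f (g j)
      = ((σ ^ (j+1))⁻¹ * ∑ i ∈ Finset.range (N ^ (j+1) + 1), x i) ^ 2 := by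
    intro j
    rw [hf, hg]; dsimp only
    rw [lacC, lacCoef_pow hN (by omega : 1 ≤ j + 1)]
  have hσmsq : ∀ m : ℕ, ((σ ^ m)⁻¹) ^ 2 = (((N:ℝ)) ^ m)⁻¹ := by
    intro m
    rw [inv_pow, ← pow_mul, mul_comm m 2, pow_mul, hσ2]
  have hfgle : ∀ j : ℕ, f (g j) ≤ ((N:ℝ)⁻¹) ^ (j+1) * Tot ^ 2 := by
    intro j
    rw [hfg j]
    have h1 : ((σ ^ (j+1))⁻¹ * ∑ i ∈ Finset.range (N ^ (j+1) + 1), x i) ^ 2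
        = ((σ ^ (j+1))⁻¹)^2 * (∑ i ∈ Finset.range (N ^ (j+1) + 1), x i) ^ 2 := by ring
    rw [h1, hσmsq, ← inv_pow]
    have h2 : (∑ i ∈ Finset.range (N ^ (j+1) + 1), x i) ^ 2 ≤ Tot ^ 2 := by
      nlinarith [hSle (N ^ (j+1)), hS0 (N ^ (j+1))]
    have hp : (0:ℝ) ≤ ((N:ℝ)⁻¹)^(j+1) := by positivity
    exact mul_le_mul_of_nonneg_left h2 hp
  have hgeo : Summable (fun j : ℕ => ((N:ℝ)⁻¹) ^ (j+1) * Tot ^ 2) := by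
    have he : (fun j : ℕ => ((N:ℝ)⁻¹) ^ (j+1) * Tot ^ 2)
        = fun j : ℕ => ((N:ℝ)⁻¹) ^ j * (((N:ℝ)⁻¹) * Tot ^ 2) := by
      funext j; rw [pow_succ]; ring
    rw [he]
    exact (summable_geometric_of_lt_one (by positivity)
      (by rw [inv_lt_one_iff₀]; right; linarith)).mul_right _
  have hfsum : Summable f := by
    rw [← hginj.summable_iff hgsupp]
    refine Summable.of_nonneg_of_le (fun j => ?_) (fun j => hfgle j) hgeo
    show 0 ≤ f (g j)
    rw [hfg j]; exact sq_nonneg _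
  -- lower bound on each power term
  set A : ℝ := ((N:ℝ) - 1) / (σ - 1) with hA
  have hA0 : 0 ≤ A := le_of_lt (div_pos hN1 hσ1)
  have hkey : ∀ m ∈ Finset.Icc 1 J,
      A ^ 2 * (1 - 2 * (σ⁻¹) ^ m) ≤ f (N ^ m) := by
    intro m hm
    rw [Finset.mem_Icc] at hm
    have h1 : f (N ^ m) = ((σ ^ m)⁻¹ * ∑ i ∈ Finset.range (N ^ m + 1), x i) ^ 2 := by
      have := hfg (m - 1)
      rw [hg] at this; dsimp only at this
      rw [show m - 1 + 1 = m by omega] at this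
      exact this
    have hlow := hSlow m hm.1 hm.2
    have hσm : (0:ℝ) < σ ^ m := by positivity
    have he : (σ ^ m)⁻¹ * (((N:ℝ) - 1) * ((σ ^ m - 1) / (σ - 1)))
        = A * (1 - (σ⁻¹) ^ m) := by
      have hmul : (σ ^ m) * (σ ^ m)⁻¹ = 1 := mul_inv_cancel₀ (ne_of_gt hσm)
      rw [hA, inv_pow]
      linear_combination (((N:ℝ) - 1) / (σ - 1)) * hmul
    have hq0 : (0:ℝ) ≤ (σ⁻¹) ^ m := by positivity
    have hq1 : (σ⁻¹ : ℝ) ^ m ≤ 1 := by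
      apply pow_le_one₀ (by positivity)
      rw [inv_le_one_iff₀]; right; linarith
    have hstep : A * (1 - (σ⁻¹) ^ m) ≤ (σ ^ m)⁻¹ * ∑ i ∈ Finset.range (N ^ m + 1), x i := by
      rw [← he]
      exact mul_le_mul_of_nonneg_left hlow (by positivity)
    have hnn : 0 ≤ A * (1 - (σ⁻¹) ^ m) := mul_nonneg hA0 (by linarith)
    rw [h1]
    have h2 : (A * (1 - (σ⁻¹) ^ m)) ^ 2
        ≤ ((σ ^ m)⁻¹ * ∑ i ∈ Finset.range (N ^ m + 1), x i) ^ 2 :=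
      pow_le_pow_left₀ hnn hstep 2
    have h3 : A ^ 2 * (1 - 2 * (σ⁻¹) ^ m) ≤ (A * (1 - (σ⁻¹) ^ m)) ^ 2 := by
      nlinarith [mul_nonneg (sq_nonneg A) (sq_nonneg ((σ⁻¹) ^ m))]
    linarith
  -- geometric sum bound : ∑_{m=1}^J σ⁻ᵐ ≤ 5/2
  have hgeo5 : ∑ m ∈ Finset.Icc 1 J, (σ⁻¹) ^ m ≤ 5 / 2 := by
    have h1 := lac_geom_tail (r := σ⁻¹) (by positivity)
      (by rw [inv_lt_one_iff₀]; right; exact hσ) 1 J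
    have h2 : σ⁻¹ ^ 1 / (1 - σ⁻¹) = 1 / (σ - 1) := by
      rw [pow_one]
      field_simp
    have h3 : (1:ℝ) / (σ - 1) ≤ 5 / 2 := by
      rw [div_le_div_iff₀ hσ1 (by norm_num)]
      linarith
    linarith
  -- lower bound for the tsum
  have hcard : (Finset.Icc 1 J).card = J := by
    rw [Nat.card_Icc]; omega
  have hsum_lb : A ^ 2 * ((J:ℝ) - 5) ≤ ∑ m ∈ Finset.Icc 1 J, f (N ^ m) := by
    have h1 : ∑ m ∈ Finset.Icc 1 J, A ^ 2 * (1 - 2 * (σ⁻¹) ^ m)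
        ≤ ∑ m ∈ Finset.Icc 1 J, f (N ^ m) := Finset.sum_le_sum hkey
    have h2 : ∑ m ∈ Finset.Icc 1 J, A ^ 2 * (1 - 2 * (σ⁻¹) ^ m)
        = (J:ℝ) * A ^ 2 - A ^ 2 * 2 * ∑ m ∈ Finset.Icc 1 J, (σ⁻¹) ^ m := by
      calc ∑ m ∈ Finset.Icc 1 J, A ^ 2 * (1 - 2 * (σ⁻¹) ^ m)
          = ∑ m ∈ Finset.Icc 1 J, (A ^ 2 - A ^ 2 * 2 * (σ⁻¹) ^ m) :=
            Finset.sum_congr rfl fun m _ => by ring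
        _ = (∑ _m ∈ Finset.Icc 1 J, A ^ 2)
              - ∑ m ∈ Finset.Icc 1 J, A ^ 2 * 2 * (σ⁻¹) ^ m := Finset.sum_sub_distrib _ _
        _ = (J:ℝ) * A ^ 2 - A ^ 2 * 2 * ∑ m ∈ Finset.Icc 1 J, (σ⁻¹) ^ m := by
            rw [Finset.sum_const, hcard, ← Finset.mul_sum, nsmul_eq_mul]
    have h3 := mul_le_mul_of_nonneg_left hgeo5 (by positivity : (0:ℝ) ≤ A ^ 2 * 2)
    linarith
  have htsum_lb : A ^ 2 * ((J:ℝ) - 5) ≤ ∑' n, f n := by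
    have h1 : ∑ n ∈ (Finset.Icc 1 J).image (fun m => N ^ m), f n ≤ ∑' n, f n :=
      Summable.sum_le_tsum _ (fun i _ => by rw [hf]; exact sq_nonneg _) hfsum
    have h2 : ∑ n ∈ (Finset.Icc 1 J).image (fun m => N ^ m), f n
        = ∑ m ∈ Finset.Icc 1 J, f (N ^ m) := by
      rw [Finset.sum_image]
      intro a _ b _ hab
      exact Nat.pow_right_injective hN hab
    linarith
  -- conclusion
  refine ⟨x, hx0, hxne, hxsum, ?_⟩
  rw [ge_iff_le, htsumx]
  have hfin : (L - ε) * Real.sqrt (((N:ℝ) - 1) * J) ≤ Real.sqrt (A ^ 2 * ((J:ℝ) - 5)) := by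
    by_cases hεL : L ≤ ε
    · have h1 : (L - ε) ≤ 0 := by linarith
      have h2 : 0 ≤ Real.sqrt (((N:ℝ) - 1) * J) := Real.sqrt_nonneg _
      nlinarith [Real.sqrt_nonneg (A ^ 2 * ((J:ℝ) - 5))]
    · push_neg at hεL
      set a : ℝ := Real.sqrt (J:ℝ) with ha
      set b : ℝ := Real.sqrt ((J:ℝ) - 5) with hb
      have ha0 : 0 ≤ a := Real.sqrt_nonneg _
      have hb0 : 0 ≤ b := Real.sqrt_nonneg _
      have ha2 : a ^ 2 = (J:ℝ) := Real.sq_sqrt (by positivity)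
      have hb2 : b ^ 2 = (J:ℝ) - 5 := Real.sq_sqrt (by linarith)
      have h5L : 5 * L ≤ ε * J := by
        rw [div_le_iff₀ hε] at hJR
        linarith
      have e1 : L * (5 * L) ≤ L * (ε * J) := mul_le_mul_of_nonneg_left h5L hL0.le
      have e2 : ε * (ε * (J:ℝ)) ≤ L * (ε * (J:ℝ)) := by
        apply mul_le_mul_of_nonneg_right hεL.le
        have : (0:ℝ) ≤ (J:ℝ) := by positivity
        positivity
      have hkey2 : ((L - ε) * a) ^ 2 ≤ (L * b) ^ 2 := by
        have hexp : ((L - ε) * a) ^ 2 = (L - ε) ^ 2 * (J:ℝ) := by rw [mul_pow, ha2]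
        have hexp2 : (L * b) ^ 2 = L ^ 2 * ((J:ℝ) - 5) := by rw [mul_pow, hb2]
        rw [hexp, hexp2]
        nlinarith [e1, e2]
      have h1 : (L - ε) * a ≤ L * b := by
        have h2 := Real.sqrt_le_sqrt hkey2
        rwa [Real.sqrt_sq (by nlinarith : 0 ≤ (L - ε) * a),
          Real.sqrt_sq (by positivity)] at h2
      have hsplit1 : Real.sqrt (((N:ℝ) - 1) * J) = Real.sqrt ((N:ℝ) - 1) * a :=
        Real.sqrt_mul hN1.le _
      have hsplit2 : Real.sqrt (A ^ 2 * ((J:ℝ) - 5)) = A * b := by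
        rw [Real.sqrt_mul (sq_nonneg A), Real.sqrt_sq hA0, hb]
      have hAL : A = Real.sqrt ((N:ℝ) - 1) * L := by
        rw [hA, hLdef, mul_div_assoc', Real.mul_self_sqrt hN1.le]
      rw [hsplit1, hsplit2, hAL]
      have hs0 : 0 ≤ Real.sqrt ((N:ℝ) - 1) := Real.sqrt_nonneg _
      calc (L - ε) * (Real.sqrt ((N:ℝ) - 1) * a)
          = Real.sqrt ((N:ℝ) - 1) * ((L - ε) * a) := by ring
        _ ≤ Real.sqrt ((N:ℝ) - 1) * (L * b) := mul_le_mul_of_nonneg_left h1 hs0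
        _ = Real.sqrt ((N:ℝ) - 1) * L * b := by ring
  calc (L - ε) * Real.sqrt (((N:ℝ) - 1) * J)
      ≤ Real.sqrt (A ^ 2 * ((J:ℝ) - 5)) := hfin
    _ ≤ Real.sqrt (∑' n, f n) := Real.sqrt_le_sqrt htsum_lb


lemma lacM2_nonneg {N : ℕ} (hN : 2 ≤ N) : 0 ≤ lacM2 N := by
  have hσ : 1 < Real.sqrt N := lac_one_lt_sqrt hN
  have hσ2 : Real.sqrt N ^ 2 = (N:ℝ) := lac_sq_sqrt N
  have hNR : (2:ℝ) ≤ N := by exact_mod_cast hN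
  rw [lacM2]
  have h1 : (0:ℝ) ≤ ((N:ℝ) - 1) / (Real.sqrt N - 1) :=
    div_nonneg (by linarith) (by linarith)
  have h2 : (0:ℝ) ≤ Real.sqrt N / (Real.sqrt N - 1) :=
    div_nonneg (by linarith) (by linarith)
  nlinarith



/-- For `N ≥ 2`: for every `ε > 0` there is a nonzero square-summable sequence
of nonnegative reals `x` with `‖Cx‖₂ ≥ (√(N−1)/(√N − 1) − ε)‖x‖₂`; consequently
the operator norm of the lacunary `C`-matrix on `ℓ²` is at least
`√(N−1)/(√N − 1)`. -/
theorem lacC_opNorm_ge (N : ℕ) (hN : 2 ≤ N) :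
    (∀ ε : ℝ, 0 < ε →
      ∃ x : ℕ → ℝ, (∀ n, 0 ≤ x n) ∧ x ≠ 0 ∧ Summable (fun n => (x n) ^ 2) ∧
        Real.sqrt (∑' n : ℕ, (lacC N x n) ^ 2) ≥
          (Real.sqrt ((N : ℝ) - 1) / (Real.sqrt (N : ℝ) - 1) - ε) *
            Real.sqrt (∑' n : ℕ, (x n) ^ 2)) ∧
    sSup { r : ℝ | ∃ x : ℕ → ℝ, Summable (fun n => (x n) ^ 2) ∧ x ≠ 0 ∧
        r = Real.sqrt (∑' n : ℕ, (lacC N x n) ^ 2) /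
            Real.sqrt (∑' n : ℕ, (x n) ^ 2) } ≥
      Real.sqrt ((N : ℝ) - 1) / (Real.sqrt (N : ℝ) - 1) := by
  constructor
  · intro ε hε
    exact lac_lower hN hε
  · set S := { r : ℝ | ∃ x : ℕ → ℝ, Summable (fun n => (x n) ^ 2) ∧ x ≠ 0 ∧
        r = Real.sqrt (∑' n : ℕ, (lacC N x n) ^ 2) /
            Real.sqrt (∑' n : ℕ, (x n) ^ 2) } with hS
    have htpos : ∀ x : ℕ → ℝ, Summable (fun n => (x n) ^ 2) → x ≠ 0 →
        0 < ∑' n : ℕ, (x n) ^ 2 := by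
      intro x hxsum hxne
      obtain ⟨n, hn⟩ := Function.ne_iff.mp hxne
      have h1 : x n ^ 2 ≤ ∑' n, x n ^ 2 := Summable.le_tsum hxsum n (fun j _ => sq_nonneg _)
      have h2 : 0 < x n ^ 2 := lt_of_le_of_ne (sq_nonneg _) (Ne.symm (pow_ne_zero 2 hn))
      linarith
    have hbdd : BddAbove S := by
      refine ⟨Real.sqrt (lacM2 N), fun r hr => ?_⟩
      obtain ⟨x, hxsum, hxne, rfl⟩ := hr
      have hB := htpos x hxsum hxne
      have hBs : 0 < Real.sqrt (∑' n : ℕ, (x n) ^ 2) := Real.sqrt_pos.mpr hB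
      rw [div_le_iff₀ hBs]
      calc Real.sqrt (∑' n : ℕ, (lacC N x n) ^ 2)
          ≤ Real.sqrt (lacM2 N * ∑' n : ℕ, (x n) ^ 2) :=
            Real.sqrt_le_sqrt (lac_upper hN x hxsum)
        _ = Real.sqrt (lacM2 N) * Real.sqrt (∑' n : ℕ, (x n) ^ 2) :=
            Real.sqrt_mul (lacM2_nonneg hN) _
    have hstep : ∀ ε : ℝ, 0 < ε →
        Real.sqrt ((N : ℝ) - 1) / (Real.sqrt (N : ℝ) - 1) - ε ≤ sSup S := by
      intro ε hε
      obtain ⟨x, hx0, hxne, hxsum, hineq⟩ := lac_lower hN hε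
      have hB := htpos x hxsum hxne
      have hBs : 0 < Real.sqrt (∑' n : ℕ, (x n) ^ 2) := Real.sqrt_pos.mpr hB
      have hr : Real.sqrt ((N : ℝ) - 1) / (Real.sqrt (N : ℝ) - 1) - ε
          ≤ Real.sqrt (∑' n : ℕ, (lacC N x n) ^ 2) /
            Real.sqrt (∑' n : ℕ, (x n) ^ 2) := by
        rw [le_div_iff₀ hBs]
        exact hineq
      exact le_trans hr (le_csSup hbdd ⟨x, hxsum, hxne, rfl⟩)
    by_contra hcon
    rw [ge_iff_le, not_le] at hcon
    set Lv := Real.sqrt ((N : ℝ) - 1) / (Real.sqrt (N : ℝ) - 1)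
    have := hstep ((Lv - sSup S) / 2) (by linarith)
    linarith
end

section
/- Let m ≥ 1 and N ≥ 2 be integers, and let x = (x_k)_{k≥0} be the sequence with x_k = 1 for 0 ≤ k ≤ N, x_k = N^{−n/2} for N^n < k ≤ N^{n+1} with 1 ≤ n ≤ m−1, and x_k = 0 for k > N^m. Then Σ_{k=0}^∞ x_k² = 2 + (N−1)m, and for every 1 ≤ n ≤ m one has Σ_{j=0}^{N^n} x_j = (√N + 1)·N^{n/2} − (√N − 1). -/
/-- For integers `m ≥ 1`, `N ≥ 2`, the lacunary test sequence `x` with `x_k = 1`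
for `0 ≤ k ≤ N`, `x_k = N^{−n/2}` for `N^n < k ≤ N^{n+1}` (`1 ≤ n ≤ m−1`) and
`x_k = 0` for `k > N^m` satisfies `∑ x_k² = 2 + (N−1)m` and, for `1 ≤ n ≤ m`,
`∑_{j=0}^{N^n} x_j = (√N + 1)·N^{n/2} − (√N − 1)`. -/
theorem lacunary_test_sequence (N m : ℕ) (hN : 2 ≤ N) (hm : 1 ≤ m)
    (x : ℕ → ℝ)
    (hx1 : ∀ k ≤ N, x k = 1)
    (hx2 : ∀ n : ℕ, 1 ≤ n → n ≤ m - 1 →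
      ∀ k : ℕ, N ^ n < k → k ≤ N ^ (n + 1) → x k = (Real.sqrt N ^ n)⁻¹)
    (hx3 : ∀ k : ℕ, N ^ m < k → x k = 0) :
    (∑' k : ℕ, (x k) ^ 2 = 2 + ((N : ℝ) - 1) * m) ∧
    ∀ n : ℕ, 1 ≤ n → n ≤ m →
      ∑ j ∈ Finset.range (N ^ n + 1), x j =
        (Real.sqrt N + 1) * Real.sqrt N ^ n - (Real.sqrt N - 1) := by
  set s := Real.sqrt N with hs
  have hN0 : (0:ℝ) ≤ N := by positivity
  have hs2 : s ^ 2 = N := Real.sq_sqrt hN0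
  have hspos : 0 < s := Real.sqrt_pos.mpr (by exact_mod_cast lt_of_lt_of_le (by norm_num) hN)
  have hNlt : ∀ n : ℕ, N ^ n < N ^ (n+1) := by
    intro n
    exact pow_lt_pow_right₀ (lt_of_lt_of_le (by norm_num) hN) (by omega)
  have key : ∀ n : ℕ, 1 ≤ n → n ≤ m →
      (∑ j ∈ Finset.range (N ^ n + 1), x j = (s + 1) * s ^ n - (s - 1)) ∧
      (∑ j ∈ Finset.range (N ^ n + 1), (x j) ^ 2
        = ((N:ℝ) + 1) + ((n:ℝ) - 1) * ((N:ℝ) - 1)) := by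
    intro n hn1
    induction n, hn1 using Nat.le_induction with
    | base =>
      intro _
      have h1 : ∑ j ∈ Finset.range (N ^ 1 + 1), x j = N + 1 := by
        rw [Finset.sum_congr rfl (fun j hj => hx1 j (by
          simp only [Finset.mem_range, pow_one] at hj; omega))]
        simp
      have h2 : ∑ j ∈ Finset.range (N ^ 1 + 1), (x j) ^ 2 = N + 1 := by
        rw [Finset.sum_congr rfl (fun j hj => by
          rw [hx1 j (by simp only [Finset.mem_range, pow_one] at hj; omega)])]
        simp
      constructor
      · rw [h1]; nlinarith [hs2]
      · rw [h2]; push_cast; ring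
    | succ n hn1 ih =>
      intro hnm
      obtain ⟨ih1, ih2⟩ := ih (by omega)
      have hle : N ^ n + 1 ≤ N ^ (n+1) + 1 := by have := hNlt n; omega
      have hsplit : ∀ f : ℕ → ℝ,
          ∑ j ∈ Finset.range (N ^ (n+1) + 1), f j
            = (∑ j ∈ Finset.range (N ^ n + 1), f j)
              + ∑ j ∈ Finset.Ico (N ^ n + 1) (N ^ (n+1) + 1), f j := by
        intro f
        simp only [Finset.range_eq_Ico]
        exact (Finset.sum_Ico_consecutive f (Nat.zero_le _) hle).symm
      have hval : ∀ k ∈ Finset.Ico (N ^ n + 1) (N ^ (n+1) + 1), x k = (s ^ n)⁻¹ := by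
        intro k hk
        simp only [Finset.mem_Ico] at hk
        exact hx2 n (by omega) (by omega) k (by omega) (by omega)
      have hcard : (Finset.Ico (N ^ n + 1) (N ^ (n+1) + 1)).card = N ^ (n+1) - N ^ n := by
        rw [Nat.card_Ico]; omega
      have hcardR : ((N ^ (n+1) - N ^ n : ℕ) : ℝ) = s ^ (2*(n+1)) - s ^ (2*n) := by
        rw [Nat.cast_sub (le_of_lt (hNlt n))]
        push_cast
        rw [pow_mul, pow_mul, hs2]
      have hsn : s ^ n ≠ 0 := pow_ne_zero _ (ne_of_gt hspos)
      constructor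
      · rw [hsplit, ih1, Finset.sum_congr rfl hval, Finset.sum_const, hcard,
          nsmul_eq_mul, hcardR]
        field_simp
        ring
      · rw [hsplit, ih2, Finset.sum_congr rfl (fun k hk => by rw [hval k hk]),
          Finset.sum_const, hcard, nsmul_eq_mul, hcardR]
        have : (s ^ (2*(n+1)) - s ^ (2*n)) * ((s ^ n)⁻¹) ^ 2 = s ^ 2 - 1 := by
          field_simp
          ring
        rw [this, hs2]
        push_cast
        ring
  constructor
  · have htsum : ∑' k : ℕ, (x k) ^ 2 = ∑ k ∈ Finset.range (N ^ m + 1), (x k) ^ 2 := by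
      apply tsum_eq_sum
      intro k hk
      simp only [Finset.mem_range, not_lt] at hk
      rw [hx3 k (by omega)]
      ring
    rw [htsum, (key m hm le_rfl).2]
    ring
  · intro n hn1 hnm
    exact (key n hn1 hnm).1
end

section
/- Fix reals s ≥ 1/4 and ε > 0, and set α := 2/(4+ε−√((4+ε)ε)) and β := s²/(α((4+ε)s−1)). Define K_n := Γ(β)Γ(n+β−α)/(Γ(n+β+1)Γ(β−α+1)) for n ≥ 1, and let x = (x_n)_{n≥0} be given by x₀ = 1 and x_n = s(n+s)K_n for n ≥ 1. Assume β > α. Then the sequence y := A_s x, with y_n = (1/(n+s))Σ_{j=0}^{n} x_j + Σ_{j=n+1}^∞ x_j/(j+s), satisfies y_n = (4+ε)·s·Γ(n+β−α+1)Γ(β)/((n+s)Γ(n+β)Γ(β−α+1)) for every n ≥ 0; in particular y₀ = 4+ε and y_n = (4+ε)·((n+β−α)(n+β)/(n+s)²)·x_n for n ≥ 1. -/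
open Filter Finset

private lemma As_alpha_key (ε : ℝ) (hε : 0 < ε) (α : ℝ)
    (hα : α = 2 / (4 + ε - Real.sqrt ((4 + ε) * ε))) :
    0 < α ∧ α < 1 ∧ (4 + ε) * (α * (1 - α)) = 1 := by
  set T : ℝ := 4 + ε with hT
  have hT4 : (4:ℝ) < T := by simp [hT]; linarith
  have hT0 : (0:ℝ) < T := by linarith
  set r : ℝ := Real.sqrt (T * ε) with hr
  have hr0 : 0 ≤ r := Real.sqrt_nonneg _
  have hr2 : r ^ 2 = T * ε := Real.sq_sqrt (by positivity)
  have hrT : r < T := by nlinarith [hr2, hr0]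
  have hd : 0 < T - r := by linarith
  have hαpos : 0 < α := by rw [hα]; positivity
  have hkey : T * (α * (1 - α)) = 1 := by
    rw [hα]; field_simp; nlinarith [hr2]
  refine ⟨hαpos, ?_, hkey⟩
  by_contra h
  push_neg at h
  nlinarith [hkey, mul_nonneg (mul_pos hT0 hαpos).le (by linarith : (0:ℝ) ≤ α - 1)]

private lemma As_G_facts (α β : ℝ) (hα : 0 < α) (hβα : α < β) :
    (∀ m : ℕ, 0 < Real.Gamma ((m:ℝ) + β - α) / Real.Gamma ((m:ℝ) + β)) ∧
    (∀ m : ℕ, Real.Gamma (((m+1:ℕ):ℝ) + β - α) / Real.Gamma (((m+1:ℕ):ℝ) + β) =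
      Real.Gamma ((m:ℝ) + β - α) / Real.Gamma ((m:ℝ) + β) * (((m:ℝ) + β - α) / ((m:ℝ) + β))) ∧
    Tendsto (fun m : ℕ => Real.Gamma ((m:ℝ) + β - α) / Real.Gamma ((m:ℝ) + β))
      atTop (nhds 0) := by
  set G : ℕ → ℝ := fun m => Real.Gamma ((m:ℝ) + β - α) / Real.Gamma ((m:ℝ) + β) with hG
  have hβ0 : 0 < β := lt_trans hα hβα
  have hpos1 : ∀ m : ℕ, (0:ℝ) < (m:ℝ) + β - α := fun m => by
    have : (0:ℝ) ≤ m := Nat.cast_nonneg m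
    linarith
  have hpos2 : ∀ m : ℕ, (0:ℝ) < (m:ℝ) + β := fun m => by
    have : (0:ℝ) ≤ m := Nat.cast_nonneg m
    linarith
  have hGpos : ∀ m, 0 < G m := fun m =>
    div_pos (Real.Gamma_pos_of_pos (hpos1 m)) (Real.Gamma_pos_of_pos (hpos2 m))
  have hGrec : ∀ m : ℕ, G (m + 1) = G m * (((m:ℝ) + β - α) / ((m:ℝ) + β)) := by
    intro m
    show Real.Gamma (((m + 1 : ℕ):ℝ) + β - α) / Real.Gamma (((m + 1 : ℕ):ℝ) + β) = _
    push_cast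
    have e1 : (m:ℝ) + 1 + β - α = ((m:ℝ) + β - α) + 1 := by ring
    have e2 : (m:ℝ) + 1 + β = ((m:ℝ) + β) + 1 := by ring
    rw [e1, e2, Real.Gamma_add_one (ne_of_gt (hpos1 m)), Real.Gamma_add_one (ne_of_gt (hpos2 m))]
    simp only [hG]
    field_simp
  refine ⟨hGpos, hGrec, ?_⟩
  have hanti : Antitone G := antitone_nat_of_succ_le (fun m => by
    rw [hGrec m]
    have h1 := hpos2 m
    calc G m * (((m:ℝ) + β - α) / ((m:ℝ) + β)) ≤ G m * 1 := by
          apply mul_le_mul_of_nonneg_left _ (hGpos m).le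
          rw [div_le_one h1]; linarith
      _ = G m := mul_one _)
  have hbdd : BddBelow (Set.range G) := ⟨0, fun z hz => by
    obtain ⟨m, rfl⟩ := hz; exact (hGpos m).le⟩
  set L := ⨅ m, G m with hL
  have htend : Tendsto G atTop (nhds L) := tendsto_atTop_ciInf hanti hbdd
  have hL0 : 0 ≤ L := le_ciInf (fun m => (hGpos m).le)
  have hLle : ∀ m, L ≤ G m := fun m => ciInf_le hbdd m
  have hdiff : ∀ m : ℕ, G m - G (m + 1) = α * G m / ((m:ℝ) + β) := by
    intro m
    rw [hGrec m]
    field_simp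
    ring
  have hsum : Summable (fun m : ℕ => G m - G (m + 1)) := by
    apply summable_of_sum_range_le (c := G 0)
    · intro m; have := hanti (Nat.le_succ m); linarith
    · intro n
      rw [Finset.sum_range_sub' G n]
      have := (hGpos n).le
      linarith
  rcases eq_or_lt_of_le hL0 with h | h
  · rwa [← h] at htend
  · exfalso
    have hcomp : Summable (fun m : ℕ => α * L / (1 + β) * (1 / ((m:ℝ) + 1))) := by
      apply Summable.of_nonneg_of_le _ _ hsum
      · intro m; positivity
      · intro m
        rw [hdiff m]
        have hm : (0:ℝ) ≤ (m:ℝ) := Nat.cast_nonneg m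
        have h1 : L ≤ G m := hLle m
        rw [div_mul_div_comm, mul_one]
        exact div_le_div₀ (mul_nonneg hα.le (hGpos m).le)
          (mul_le_mul_of_nonneg_left h1 hα.le) (hpos2 m) (by nlinarith)
    have hsm : Summable (fun m : ℕ => (1 / ((m:ℝ) + 1))) := by
      have hc : α * L / (1 + β) ≠ 0 := by positivity
      exact (summable_mul_left_iff hc).mp hcomp
    have hns : ¬ Summable (fun m : ℕ => (1 / ((m:ℝ) + 1))) := by
      have := mt (summable_nat_add_iff (f := fun n : ℕ ↦ 1 / (n : ℝ)) 1).mp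
        Real.not_summable_one_div_natCast
      simpa using this
    exact hns hsm

set_option maxHeartbeats 1000000 in
/-- With `s ≥ 1/4`, `ε > 0`, `α = 2/(4+ε−√((4+ε)ε))`, `β = s²/(α((4+ε)s−1))`,
`K_n = Γ(β)Γ(n+β−α)/(Γ(n+β+1)Γ(β−α+1))`, `x₀ = 1`, `x_n = s(n+s)K_n`, and
assuming `β > α`, the sequence `y = A_s x` given by
`y_n = (1/(n+s))∑_{j=0}^n x_j + ∑_{j=n+1}^∞ x_j/(j+s)` satisfies
`y_n = (4+ε)sΓ(n+β−α+1)Γ(β)/((n+s)Γ(n+β)Γ(β−α+1))` for all `n ≥ 0`; in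
particular `y₀ = 4+ε` and `y_n = (4+ε)((n+β−α)(n+β)/(n+s)²)x_n` for `n ≥ 1`. -/
theorem As_eigen_sequence (s ε : ℝ) (hs : 1 / 4 ≤ s) (hε : 0 < ε)
    (α β : ℝ)
    (hα : α = 2 / (4 + ε - Real.sqrt ((4 + ε) * ε)))
    (hβ : β = s ^ 2 / (α * ((4 + ε) * s - 1)))
    (hβα : α < β)
    (K : ℕ → ℝ)
    (hK : ∀ n : ℕ, 1 ≤ n → K n =
      Real.Gamma β * Real.Gamma (n + β - α) /
        (Real.Gamma (n + β + 1) * Real.Gamma (β - α + 1)))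
    (x : ℕ → ℝ) (hx0 : x 0 = 1) (hxn : ∀ n : ℕ, 1 ≤ n → x n = s * (n + s) * K n)
    (y : ℕ → ℝ)
    (hy : ∀ n : ℕ, y n = (1 / (n + s)) * ∑ j ∈ Finset.range (n + 1), x j +
      ∑' j : ℕ, x (n + 1 + j) / ((n : ℝ) + 1 + j + s)) :
    (∀ n : ℕ, y n = (4 + ε) * s * Real.Gamma (n + β - α + 1) * Real.Gamma β /
        ((n + s) * Real.Gamma (n + β) * Real.Gamma (β - α + 1))) ∧
    y 0 = 4 + ε ∧
    ∀ n : ℕ, 1 ≤ n →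
      y n = (4 + ε) * ((n + β - α) * (n + β) / (n + s) ^ 2) * x n := by
  obtain ⟨hα0, hα1, hkey⟩ := As_alpha_key ε hε α hα
  obtain ⟨hGpos0, hGrec0, hGtend0⟩ := As_G_facts α β hα0 hβα
  obtain ⟨G, hGdef⟩ : ∃ G : ℕ → ℝ,
      G = fun m : ℕ => Real.Gamma ((m:ℝ) + β - α) / Real.Gamma ((m:ℝ) + β) := ⟨_, rfl⟩
  obtain ⟨c, hcdef⟩ : ∃ c : ℝ, c = Real.Gamma β / Real.Gamma (β - α + 1) := ⟨_, rfl⟩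
  have hGm : ∀ m : ℕ, G m = Real.Gamma ((m:ℝ) + β - α) / Real.Gamma ((m:ℝ) + β) := by
    intro m; rw [hGdef]
  have hGpos : ∀ m, 0 < G m := fun m => by rw [hGm m]; exact hGpos0 m
  have hGrec : ∀ m : ℕ, G (m + 1) = G m * (((m:ℝ) + β - α) / ((m:ℝ) + β)) := by
    intro m; rw [hGm (m+1), hGm m]; exact hGrec0 m
  have hGtend : Filter.Tendsto G Filter.atTop (nhds 0) := by
    rw [hGdef]; exact hGtend0
  have hβ0 : 0 < β := lt_trans hα0 hβα
  have hs0 : 0 < s := lt_of_lt_of_le (by norm_num) hs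
  have hns : ∀ n : ℕ, (0:ℝ) < (n:ℝ) + s := fun n => by
    have : (0:ℝ) ≤ n := Nat.cast_nonneg n; linarith
  have hnβ : ∀ n : ℕ, (0:ℝ) < (n:ℝ) + β := fun n => by
    have : (0:ℝ) ≤ n := Nat.cast_nonneg n; linarith
  have hnβα : ∀ n : ℕ, (0:ℝ) < (n:ℝ) + β - α := fun n => by
    have : (0:ℝ) ≤ n := Nat.cast_nonneg n; linarith
  have hΓβ : Real.Gamma β ≠ 0 := ne_of_gt (Real.Gamma_pos_of_pos hβ0)
  have hΓβα : Real.Gamma (β - α) ≠ 0 :=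
    ne_of_gt (Real.Gamma_pos_of_pos (by linarith))
  have hΓβα1 : Real.Gamma (β - α + 1) ≠ 0 :=
    ne_of_gt (Real.Gamma_pos_of_pos (by linarith))
  have hΓnβ : ∀ n : ℕ, Real.Gamma ((n:ℝ) + β) ≠ 0 := fun n =>
    ne_of_gt (Real.Gamma_pos_of_pos (hnβ n))
  have hΓnβα : ∀ n : ℕ, Real.Gamma ((n:ℝ) + β - α) ≠ 0 := fun n =>
    ne_of_gt (Real.Gamma_pos_of_pos (hnβα n))
  have hΓ1 : Real.Gamma (β - α + 1) = (β - α) * Real.Gamma (β - α) :=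
    Real.Gamma_add_one (by linarith : β - α ≠ 0)
  have hTs : 1 < (4 + ε) * s := by nlinarith
  have hs2 : s ^ 2 = β * (α * ((4 + ε) * s - 1)) := by
    have hd : α * ((4 + ε) * s - 1) ≠ 0 := ne_of_gt (mul_pos hα0 (by linarith))
    rw [hβ, div_mul_cancel₀ _ hd]
  -- x in terms of G
  have hxG : ∀ m : ℕ, 1 ≤ m → x m = s * ((m:ℝ) + s) * c * G m / ((m:ℝ) + β) := by
    intro m hm
    rw [hxn m hm, hK m hm, hGm m, hcdef]
    have : (m:ℝ) + β + 1 = ((m:ℝ) + β) + 1 := by ring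
    rw [this, Real.Gamma_add_one (ne_of_gt (hnβ m))]
    field_simp
  -- the telescoping difference
  have hGdiffβ : ∀ m : ℕ, ((m:ℝ) + β) * (G m - G (m + 1)) = α * G m := by
    intro m
    rw [hGrec m]
    field_simp
    ring
  -- the tail sum
  have htail : ∀ n : ℕ, (∑' j : ℕ, x (n + 1 + j) / ((n : ℝ) + 1 + j + s)) =
      (s * c / α) * G (n + 1) := by
    intro n
    have hterm : ∀ j : ℕ, x (n + 1 + j) / ((n : ℝ) + 1 + j + s) =
        (s * c / α) * (G (n + 1 + j) - G (n + 1 + j + 1)) := by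
      intro j
      have h1 : 1 ≤ n + 1 + j := by omega
      rw [hxG _ h1]
      have hd := hGdiffβ (n + 1 + j)
      have hcast : ((n + 1 + j : ℕ) : ℝ) = (n : ℝ) + 1 + j := by push_cast; ring
      rw [hcast] at hd ⊢
      have hnb := hnβ (n + 1 + j)
      rw [hcast] at hnb
      have hnssum := hns (n + 1 + j)
      rw [hcast] at hnssum
      rw [eq_comm]
      field_simp
      linear_combination c * hd
    have hHasSum : HasSum (fun j : ℕ => G (n + 1 + j) - G (n + 1 + j + 1)) (G (n + 1)) := by
      have hnn : ∀ j : ℕ, 0 ≤ G (n + 1 + j) - G (n + 1 + j + 1) := by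
        intro j
        have := hGdiffβ (n + 1 + j)
        have h2 := hnβ (n + 1 + j)
        nlinarith [hGpos (n + 1 + j)]
      rw [hasSum_iff_tendsto_nat_of_nonneg hnn]
      have hps : ∀ N : ℕ, ∑ j ∈ Finset.range N, (G (n + 1 + j) - G (n + 1 + j + 1)) =
          G (n + 1) - G (n + 1 + N) := by
        intro N
        have := Finset.sum_range_sub' (fun j => G (n + 1 + j)) N
        simpa [add_assoc] using this
      simp only [hps]
      have hshift : Filter.Tendsto (fun N : ℕ => G (n + 1 + N)) Filter.atTop (nhds 0) := by
        have := hGtend.comp (tendsto_add_atTop_nat (n + 1))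
        simpa [Function.comp_def, Nat.add_comm] using this
      simpa using (tendsto_const_nhds.sub hshift)
    rw [tsum_congr hterm]
    rw [(hHasSum.mul_left (s * c / α)).tsum_eq]
  -- values at 0 and 1
  have hcG0 : c * ((β - α) * G 0) = 1 := by
    rw [hGm 0, hcdef, hΓ1]
    simp only [Nat.cast_zero, zero_add]
    have hβα0 : β - α ≠ 0 := by linarith
    field_simp
  have hcG1 : c * G 1 = 1 / β := by
    rw [hGm 1, hcdef, hΓ1]
    simp only [Nat.cast_one]
    rw [show (1:ℝ) + β - α = (β - α) + 1 from by ring,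
      show (1:ℝ) + β = β + 1 from by ring,
      Real.Gamma_add_one (by linarith : β - α ≠ 0),
      Real.Gamma_add_one (ne_of_gt hβ0)]
    have hβα0 : β - α ≠ 0 := by linarith
    rw [eq_div_iff (ne_of_gt hβ0)]
    field_simp
  have hsc : (4 + ε) * s - s ^ 2 / (α * β) = 1 := by
    rw [hs2]
    field_simp
    ring
  -- partial sums
  have hS : ∀ n : ℕ, (∑ j ∈ Finset.range (n + 1), x j) =
      (4 + ε) * s * c * (((n:ℝ) + β - α) * G n) - ((n:ℝ) + s) * (s * c / α) * G (n + 1) := by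
    intro n
    induction n with
    | zero =>
      simp only [Finset.sum_range_one, hx0, Nat.cast_zero, zero_add]
      linear_combination (-((4+ε)*s)) * hcG0 + (s^2/α) * hcG1 - hsc
    | succ n ih =>
      rw [Finset.sum_range_succ, ih, hxG (n + 1) (by omega)]
      have hPn : ((n:ℝ) + β - α) * G n = ((n:ℝ) + β) * G (n + 1) := by
        rw [hGrec n]
        field_simp
      have hG2 : G (n + 2) = G (n + 1) * ((((n+1:ℕ):ℝ) + β - α) / (((n+1:ℕ):ℝ) + β)) :=
        hGrec (n + 1)
      have hcast : ((n + 1 : ℕ) : ℝ) = (n : ℝ) + 1 := by push_cast; ring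
      rw [hcast] at hG2
      rw [hPn, show n + 1 + 1 = n + 2 from rfl, hG2, hcast]
      have h1 : ((n:ℝ) + 1 + β) ≠ 0 := ne_of_gt (by have := hnβ n; linarith)
      have hα' : α ≠ 0 := ne_of_gt hα0
      have hT : (4 + ε) = 1 / (α * (1 - α)) := by
        rw [eq_div_iff (by intro hcon; rw [hcon, mul_zero] at hkey; linarith)]
        linarith [hkey]
      rw [hT]
      have h1α : (1:ℝ) - α ≠ 0 := by intro hcon; nlinarith [hkey]
      field_simp
      ring
  -- main formula
  have hmain : ∀ n : ℕ, y n =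
      (4 + ε) * s * c * (((n:ℝ) + β - α) * G n) / ((n:ℝ) + s) := by
    intro n
    rw [hy n, hS n, htail n]
    have h1 : ((n:ℝ) + s) ≠ 0 := ne_of_gt (hns n)
    have hα' : α ≠ 0 := ne_of_gt hα0
    field_simp
    ring
  have hpart1 : ∀ n : ℕ, y n = (4 + ε) * s * Real.Gamma ((n:ℝ) + β - α + 1) * Real.Gamma β /
      (((n:ℝ) + s) * Real.Gamma ((n:ℝ) + β) * Real.Gamma (β - α + 1)) := by
    intro n
    rw [hmain n, hGm n, hcdef]
    rw [Real.Gamma_add_one (ne_of_gt (hnβα n))]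
    rw [div_eq_div_iff (ne_of_gt (hns n)) (by
      exact mul_ne_zero (mul_ne_zero (ne_of_gt (hns n)) (hΓnβ n)) hΓβα1)]
    field_simp
  refine ⟨hpart1, ?_, ?_⟩
  · rw [hpart1 0]
    simp only [Nat.cast_zero, zero_add]
    rw [hΓ1]
    have hβα0 : β - α ≠ 0 := by linarith
    field_simp
  · intro n hn
    rw [hmain n, hxG n hn]
    have h1 : ((n:ℝ) + s) ≠ 0 := ne_of_gt (hns n)
    have h2 : ((n:ℝ) + β) ≠ 0 := ne_of_gt (hnβ n)
    field_simp
end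

section
/- Let s ≥ 1 be real, 1 < p < ∞, and q := p/(p−1). For an integer m ≥ 0 let x_m be the sequence with entries (n+s)^{−1/p} for 0 ≤ n ≤ m and 0 for n > m. Then ‖A_s x_m‖_p^p ≥ (pq)^p·Σ_{n=0}^m (1/(n+s))·(1 − (1/p)(s/(n+s))^{1/q} − (1/q)((m+s+1)/(n+s))^{−1/p})^p, and moreover there is a constant c (independent of m) such that (pq)^p·Σ_{n=0}^m (1/(n+s))·((s/(n+s))^{1/q} + (p/q)((m+s+1)/(n+s))^{−1/p}) ≤ c for all m ≥ 0. -/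
open Real Finset

private lemma bern_up {r a : ℝ} (hr0 : 0 ≤ r) (hr1 : r ≤ 1) (ha : 0 < a) :
    (a + 1) ^ r ≤ a ^ r + r * a ^ (r - 1) := by
  have h0 : (0:ℝ) ≤ 1/a := by positivity
  have h1 : (-1:ℝ) ≤ 1 / a := by linarith
  have key : (1 + 1/a) ^ r ≤ 1 + r * (1/a) :=
    rpow_one_add_le_one_add_mul_self h1 hr0 hr1
  have ha1 : a + 1 = a * (1 + 1/a) := by field_simp
  calc (a+1)^r = a^r * (1+1/a)^r := by
        rw [ha1, mul_rpow ha.le (by positivity)]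
    _ ≤ a^r * (1 + r*(1/a)) := by
        exact mul_le_mul_of_nonneg_left key (rpow_nonneg ha.le r)
    _ = a^r + r * (a^r / a) := by ring
    _ = a^r + r * a^(r-1) := by rw [rpow_sub_one ha.ne' r]

private lemma bern_down {r a : ℝ} (hr0 : 0 ≤ r) (hr1 : r ≤ 1) (ha : 1 ≤ a) :
    (a - 1) ^ r ≤ a ^ r - r * a ^ (r - 1) := by
  have ha0 : (0:ℝ) < a := lt_of_lt_of_le one_pos ha
  have h1 : (-1:ℝ) ≤ -(1 / a) := by
    rw [neg_le_neg_iff]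
    exact div_le_one_of_le₀ ha ha0.le
  have key : (1 + -(1/a)) ^ r ≤ 1 + r * (-(1/a)) :=
    rpow_one_add_le_one_add_mul_self h1 hr0 hr1
  have ha1 : a - 1 = a * (1 + -(1/a)) := by field_simp; ring
  have hnn : (0:ℝ) ≤ 1 + -(1/a) := by
    have : 1/a ≤ 1 := div_le_one_of_le₀ ha ha0.le
    linarith
  calc (a-1)^r = a^r * (1 + -(1/a))^r := by
        rw [ha1, mul_rpow ha0.le hnn]
    _ ≤ a^r * (1 + r * (-(1/a))) := by
        exact mul_le_mul_of_nonneg_left key (rpow_nonneg ha0.le r)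
    _ = a^r - r * (a^r / a) := by ring
    _ = a^r - r * a^(r-1) := by rw [rpow_sub_one ha0.ne' r]

private lemma bern_neg_up {r a : ℝ} (hr0 : 0 ≤ r) (hr1 : r ≤ 1) (ha : 1 ≤ a) :
    a ^ (-r) - r * a ^ (-r - 1) ≤ (a + 1) ^ (-r) := by
  have ha0 : (0:ℝ) < a := lt_of_lt_of_le one_pos ha
  have hb : (0:ℝ) < a ^ r := rpow_pos_of_pos ha0 r
  have hup : (a+1) ^ r ≤ a ^ r + r * (a ^ r / a) := by
    have := bern_up hr0 hr1 ha0
    rwa [rpow_sub_one ha0.ne' r] at this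
  have hD : (0:ℝ) < a ^ r + r * (a ^ r / a) := by positivity
  have hA : (0:ℝ) < (a+1) ^ r := rpow_pos_of_pos (by linarith) r
  have h1 : (a+1) ^ (-r) = ((a+1)^r)⁻¹ := rpow_neg (by linarith) r
  have h2 : a ^ (-r) = (a^r)⁻¹ := rpow_neg ha0.le r
  have h3 : a ^ (-r-1) = (a^r * a)⁻¹ := by
    rw [show -r-1 = -(r+1) by ring, rpow_neg ha0.le, rpow_add_one ha0.ne']
  rw [h1, h2, h3]
  have hinv : (a ^ r + r * (a ^ r / a))⁻¹ ≤ ((a+1)^r)⁻¹ :=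
    inv_anti₀ hA hup
  refine le_trans ?_ hinv
  apply le_of_mul_le_mul_right ?_ hD
  rw [inv_mul_cancel₀ hD.ne']
  have heq : ((a^r)⁻¹ - r * (a^r*a)⁻¹) * (a ^ r + r * (a ^ r / a)) = 1 - (r/a)^2 := by
    field_simp
    ring
  rw [heq]
  have : (0:ℝ) ≤ (r/a)^2 := sq_nonneg _
  linarith

private lemma bern_neg_down {r a : ℝ} (hr0 : 0 ≤ r) (hr1 : r ≤ 1) (ha : 2 ≤ a) :
    a ^ (-r) + r * a ^ (-r - 1) ≤ (a - 1) ^ (-r) := by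
  have ha0 : (0:ℝ) < a := by linarith
  have ha1 : (1:ℝ) ≤ a - 1 := by linarith
  have hb : (0:ℝ) < a ^ r := rpow_pos_of_pos ha0 r
  have hdown : (a-1) ^ r ≤ a ^ r - r * (a ^ r / a) := by
    have := bern_down hr0 hr1 (by linarith : (1:ℝ) ≤ a)
    rwa [rpow_sub_one ha0.ne' r] at this
  have hE : (0:ℝ) < a ^ r - r * (a ^ r / a) := by
    have h5 : a^r/a ≤ a^r/2 := div_le_div_of_nonneg_left hb.le (by norm_num) ha
    have h4 : r * (a^r/a) ≤ a^r/2 := by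
      have := mul_le_of_le_one_left (by positivity : (0:ℝ) ≤ a^r/a) hr1
      linarith
    have h6 : (0:ℝ) < a^r/2 := by positivity
    linarith
  have hA : (0:ℝ) < (a-1) ^ r := rpow_pos_of_pos (by linarith) r
  have h1 : (a-1) ^ (-r) = ((a-1)^r)⁻¹ := rpow_neg (by linarith) r
  have h2 : a ^ (-r) = (a^r)⁻¹ := rpow_neg ha0.le r
  have h3 : a ^ (-r-1) = (a^r * a)⁻¹ := by
    rw [show -r-1 = -(r+1) by ring, rpow_neg ha0.le, rpow_add_one ha0.ne']
  rw [h1, h2, h3]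
  have hinv : (a ^ r - r * (a ^ r / a))⁻¹ ≤ ((a-1)^r)⁻¹ := inv_anti₀ hA hdown
  refine le_trans ?_ hinv
  apply le_of_mul_le_mul_right ?_ hE
  rw [inv_mul_cancel₀ hE.ne']
  have heq : ((a^r)⁻¹ + r * (a^r*a)⁻¹) * (a ^ r - r * (a ^ r / a)) = 1 - (r/a)^2 := by
    field_simp
    ring
  rw [heq]
  have : (0:ℝ) ≤ (r/a)^2 := sq_nonneg _
  linarith

private lemma telescope_le_sum (f g : ℕ → ℝ) (a : ℕ)
    (h : ∀ k, a ≤ k → g (k+1) - g k ≤ f k) :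
    ∀ b, a ≤ b → g b - g a ≤ ∑ j ∈ Finset.Ico a b, f j := by
  intro b hb
  induction b, hb using Nat.le_induction with
  | base => simp
  | succ b hb ih =>
      rw [Finset.sum_Ico_succ_top hb]
      have := h b hb
      linarith

private lemma sum_le_telescope (f g : ℕ → ℝ) (a : ℕ)
    (h : ∀ k, a ≤ k → f k ≤ g (k+1) - g k) :
    ∀ b, a ≤ b → ∑ j ∈ Finset.Ico a b, f j ≤ g b - g a := by
  intro b hb
  induction b, hb using Nat.le_induction with
  | base => simp
  | succ b hb ih =>
      rw [Finset.sum_Ico_succ_top hb]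
      have := h b hb
      linarith

set_option maxHeartbeats 2000000 in
private lemma key_term (s p q : ℝ) (hs : 1 ≤ s) (hp : 1 < p)
    (hq : q = p / (p - 1)) (m n : ℕ) (hnm : n ≤ m) :
    (p * q) ^ p * ((1 / ((n : ℝ) + s)) *
      (1 - (1 / p) * (s / ((n : ℝ) + s)) ^ (1 / q) -
        (1 / q) * (((m : ℝ) + s + 1) / ((n : ℝ) + s)) ^ (-(1 / p))) ^ p)
    ≤ |∑ j ∈ Finset.range (m + 1),
        ((j : ℝ) + s) ^ (-(1 / p)) / (((max n j : ℕ) : ℝ) + s)| ^ p := by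
  have hp0 : (0:ℝ) < p := by linarith
  have hp1 : (0:ℝ) < p - 1 := by linarith
  have hq0 : (0:ℝ) < q := by rw [hq]; positivity
  have hpq : 1/p + 1/q = 1 := by rw [hq]; field_simp; ring
  have hq1 : (1:ℝ) < q := by rw [hq, lt_div_iff₀ hp1]; linarith
  have hpqmul : p * q = p + q := by rw [hq]; field_simp; ring
  have hs0 : (0:ℝ) < s := by linarith
  have hrp0 : (0:ℝ) ≤ 1/p := by positivity
  have hrp1 : 1/p ≤ 1 := by rw [div_le_one hp0]; linarith
  have hrq0 : (0:ℝ) ≤ 1/q := by positivity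
  have hrq1 : 1/q ≤ 1 := by rw [div_le_one hq0]; linarith
  set a : ℝ := (n:ℝ) + s with ha_def
  set M : ℝ := (m:ℝ) + s + 1 with hM_def
  clear_value a M
  have ha1 : (1:ℝ) ≤ a := by
    have : (0:ℝ) ≤ (n:ℝ) := Nat.cast_nonneg n
    simp only [ha_def]; linarith
  have ha0 : (0:ℝ) < a := by linarith
  have hM0 : (0:ℝ) < M := by
    have : (0:ℝ) ≤ (m:ℝ) := Nat.cast_nonneg m
    simp only [hM_def]; linarith
  have haM : a ≤ M := by
    have : (n:ℝ) ≤ (m:ℝ) := Nat.cast_le.2 hnm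
    simp only [ha_def, hM_def]; linarith
  set X : ℝ := (s / a) ^ (1/q) with hX_def
  set Y : ℝ := (M / a) ^ (-(1/p)) with hY_def
  set B : ℝ := 1 - (1/p) * X - (1/q) * Y with hB_def
  clear_value X Y
  clear_value B
  -- B bounds
  have hXnn : 0 ≤ X := by rw [hX_def]; positivity
  have hYnn : 0 ≤ Y := by rw [hY_def]; positivity
  have hX1 : X ≤ 1 := by
    rw [hX_def]
    apply rpow_le_one (by positivity) _ hrq0
    rw [div_le_one ha0]
    simp only [ha_def]
    have : (0:ℝ) ≤ (n:ℝ) := Nat.cast_nonneg n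
    linarith
  have hY1 : Y ≤ 1 := by
    rw [hY_def]
    apply rpow_le_one_of_one_le_of_nonpos _ (by linarith : -(1/p) ≤ 0)
    rw [le_div_iff₀ ha0, one_mul]
    exact haM
  have hB0 : 0 ≤ B := by
    have h1 : (1/p) * X ≤ 1/p := by nlinarith
    have h2 : (1/q) * Y ≤ 1/q := by nlinarith
    simp only [hB_def]; linarith
  -- the sum, split
  set G : ℝ := ∑ j ∈ Finset.range (m + 1),
      ((j : ℝ) + s) ^ (-(1 / p)) / (((max n j : ℕ) : ℝ) + s) with hG_def
  clear_value G
  have hsplit : G = (∑ j ∈ Finset.Ico 0 (n+1), ((j : ℝ) + s) ^ (-(1/p))) / a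
      + ∑ j ∈ Finset.Ico (n+1) (m+1), ((j : ℝ) + s) ^ (-(1/p)) / ((j : ℝ) + s) := by
    rw [hG_def, Finset.range_eq_Ico,
      ← Finset.sum_Ico_consecutive _ (Nat.zero_le (n+1)) (by omega : n+1 ≤ m+1)]
    congr 1
    · rw [Finset.sum_div]
      apply Finset.sum_congr rfl
      intro j hj
      have hj' : j ≤ n := by
        have := (Finset.mem_Ico.1 hj).2; omega
      rw [max_eq_left hj', ← ha_def]
    · apply Finset.sum_congr rfl
      intro j hj
      have hj' : n ≤ j := by
        have := (Finset.mem_Ico.1 hj).1; omega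
      rw [max_eq_right hj']
  -- lower bound for first block
  have hstep1 : ∀ k : ℕ, 0 ≤ k →
      q * (((k:ℝ)+1+s)^(1/q)) - q * (((k:ℝ)+s)^(1/q)) ≤ ((k : ℝ) + s) ^ (-(1/p)) := by
    intro k _
    have hc1 : (1:ℝ) ≤ (k:ℝ) + s := by
      have : (0:ℝ) ≤ (k:ℝ) := Nat.cast_nonneg k
      linarith
    have hc0 : (0:ℝ) < (k:ℝ) + s := by linarith
    have hb := bern_up hrq0 hrq1 hc0
    have hexp : 1/q - 1 = -(1/p) := by linarith
    rw [hexp] at hb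
    have h1 := mul_le_mul_of_nonneg_left hb hq0.le
    have h3 : q * (((k:ℝ)+s)^(1/q) + (1/q) * (((k:ℝ)+s)^(-(1/p))))
        = q * (((k:ℝ)+s)^(1/q)) + ((k:ℝ)+s)^(-(1/p)) := by
      field_simp
    have h4 : (k:ℝ) + s + 1 = (k:ℝ) + 1 + s := by ring
    rw [h4] at h1
    linarith
  have L1 : q * (((n:ℝ)+1+s)^(1/q)) - q * (s^(1/q))
      ≤ ∑ j ∈ Finset.Ico 0 (n+1), ((j : ℝ) + s) ^ (-(1/p)) := by
    have H := telescope_le_sum (fun j => ((j : ℝ) + s) ^ (-(1/p)))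
      (fun j => q * (((j:ℝ)+s)^(1/q))) 0
      (fun k hk => by
        have := hstep1 k hk
        push_cast
        linarith) (n+1) (Nat.zero_le _)
    push_cast at H
    rw [zero_add] at H
    linarith
  -- lower bound for second block
  have hstep2 : ∀ k : ℕ, n+1 ≤ k →
      p * (((k:ℝ)+s)^(-(1/p))) - p * (((k:ℝ)+1+s)^(-(1/p)))
        ≤ ((k : ℝ) + s) ^ (-(1/p)) / ((k:ℝ) + s) := by
    intro k _
    have hc1 : (1:ℝ) ≤ (k:ℝ) + s := by
      have : (0:ℝ) ≤ (k:ℝ) := Nat.cast_nonneg k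
      linarith
    have hc0 : (0:ℝ) < (k:ℝ) + s := by linarith
    have hb := bern_neg_up hrp0 hrp1 hc1
    have hdiv : ((k:ℝ)+s) ^ (-(1/p) - 1) = ((k:ℝ)+s) ^ (-(1/p)) / ((k:ℝ)+s) :=
      rpow_sub_one hc0.ne' _
    rw [hdiv] at hb
    have h1 := mul_le_mul_of_nonneg_left hb hp0.le
    have h3 : p * (((k:ℝ)+s)^(-(1/p)) - (1/p) * (((k:ℝ)+s)^(-(1/p)) / ((k:ℝ)+s)))
        = p * (((k:ℝ)+s)^(-(1/p))) - ((k:ℝ)+s)^(-(1/p)) / ((k:ℝ)+s) := by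
      field_simp
    have h4 : (k:ℝ) + s + 1 = (k:ℝ) + 1 + s := by ring
    rw [h4] at h1
    linarith
  have L2 : p * (((n:ℝ)+1+s)^(-(1/p))) - p * (((m:ℝ)+1+s)^(-(1/p)))
      ≤ ∑ j ∈ Finset.Ico (n+1) (m+1), ((j : ℝ) + s) ^ (-(1/p)) / ((j : ℝ) + s) := by
    have H := telescope_le_sum (fun j => ((j : ℝ) + s) ^ (-(1/p)) / ((j : ℝ) + s))
      (fun j => -(p * (((j:ℝ)+s)^(-(1/p))))) (n+1)
      (fun k hk => by
        have := hstep2 k hk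
        push_cast
        linarith) (m+1) (by omega)
    push_cast at H
    linarith
  -- rewrite cast forms
  have ha' : (n:ℝ)+1+s = a+1 := by simp only [ha_def]; ring
  have hM' : (m:ℝ)+1+s = M := by simp only [hM_def]; ring
  rw [ha'] at L1
  rw [ha', hM'] at L2
  have ha10 : (0:ℝ) < a + 1 := by linarith
  set w : ℝ := (a+1)^(-(1/p)) with hw_def
  clear_value w
  have hw0 : 0 < w := by rw [hw_def]; exact rpow_pos_of_pos ha10 _
  have hber : (1 + 1/a)^(1/p) ≤ 1 + (1/p)*(1/a) := by
    apply rpow_one_add_le_one_add_mul_self _ hrp0 hrp1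
    have : (0:ℝ) ≤ 1/a := by positivity
    linarith
  have e3 : a^(-(1/p)) = w * ((1 + 1/a)^(1/p)) := by
    rw [hw_def, show (1:ℝ)+1/a = (a+1)/a by field_simp]
    rw [div_rpow (by linarith) ha0.le]
    rw [rpow_neg ha10.le, rpow_neg ha0.le]
    field_simp
  have e2 : a^(-(1/p)) ≤ w * (1 + (1/p)*(1/a)) := by
    rw [e3]
    exact mul_le_mul_of_nonneg_left hber hw0.le
  have hC' : p*q*(a^(-(1/p))) ≤ w*(p*q + q/a) := by
    have h6 : p*q*(w*(1 + (1/p)*(1/a))) = w*(p*q + q/a) := by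
      field_simp
    rw [← h6]
    exact mul_le_mul_of_nonneg_left e2 (by positivity)
  have e1 : (a+1)^(1/q) = (a+1) * w := by
    rw [hw_def, show (1:ℝ)/q = 1 + (-(1/p)) by linarith, rpow_add ha10, rpow_one]
  have hC : p*q*(a^(-(1/p))) ≤ q*((a+1)^(1/q))/a + p*w := by
    rw [e1]
    have h7 : q*((a+1)*w)/a + p*w = w*(p*q + q/a) := by
      field_simp
      linear_combination (-a) * hpqmul
    linarith [hC', h7]
  -- identities relating B to explicit error terms
  have hsum_exp : -(1/p) - 1/q = -1 := by linarith
  have h1 : a^(-(1/p)) * X = s^(1/q) / a := by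
    rw [hX_def, div_rpow hs0.le ha0.le]
    rw [show a^(-(1/p)) * (s^(1/q) / a^(1/q)) = s^(1/q) * (a^(-(1/p)) / a^(1/q)) by ring]
    rw [← rpow_sub ha0, hsum_exp, rpow_neg_one]
    ring
  have h2 : a^(-(1/p)) * Y = M^(-(1/p)) := by
    rw [hY_def, div_rpow hM0.le ha0.le]
    rw [show a^(-(1/p)) * (M^(-(1/p)) / a^(-(1/p))) = M^(-(1/p)) * (a^(-(1/p)) / a^(-(1/p))) by ring]
    rw [div_self (rpow_pos_of_pos ha0 _).ne', mul_one]
  have hDid : p*q*(a^(-(1/p))) * B = p*q*(a^(-(1/p))) - q*(s^(1/q)/a) - p*(M^(-(1/p))) := by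
    rw [← h1, ← h2, hB_def]
    field_simp
  have hD0 : 0 ≤ p*q*(a^(-(1/p))) * B :=
    mul_nonneg (mul_nonneg (by positivity) (rpow_nonneg ha0.le _)) hB0
  have hDG : p*q*(a^(-(1/p))) * B ≤ G := by
    rw [hDid, hsplit]
    have hL1d : (q*((a+1)^(1/q)) - q*(s^(1/q)))/a
        ≤ (∑ j ∈ Finset.Ico 0 (n+1), ((j : ℝ) + s) ^ (-(1/p))) / a := by
      gcongr
    have hsub : (q*((a+1)^(1/q)) - q*(s^(1/q)))/a
        = q*((a+1)^(1/q))/a - q*(s^(1/q))/a := sub_div _ _ _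
    have hma : q*(s^(1/q))/a = q*(s^(1/q)/a) := mul_div_assoc _ _ _
    rw [hsub, hma] at hL1d
    linarith
  have habs : p*q*(a^(-(1/p))) * B ≤ |G| := le_trans hDG (le_abs_self G)
  have hpow := rpow_le_rpow hD0 habs hp0.le
  refine le_trans (le_of_eq ?_) hpow
  rw [mul_rpow (by positivity : (0:ℝ) ≤ p*q*(a^(-(1/p)))) hB0]
  rw [mul_rpow (by positivity : (0:ℝ) ≤ p*q) (rpow_nonneg ha0.le _)]
  rw [← rpow_mul ha0.le]
  rw [show -(1/p)*p = -1 by field_simp, rpow_neg_one]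
  ring

set_option maxHeartbeats 2000000 in
private lemma part2_bound (s p q : ℝ) (hs : 1 ≤ s) (hp : 1 < p)
    (hq : q = p / (p - 1)) (m : ℕ) :
    ∑ n ∈ Finset.range (m + 1), (1 / ((n : ℝ) + s)) *
        ((s / ((n : ℝ) + s)) ^ (1 / q) +
          (p / q) * (((m : ℝ) + s + 1) / ((n : ℝ) + s)) ^ (-(1 / p)))
      ≤ s ^ (1/q) * (s ^ (-(1+1/q)) + q * s ^ (-(1/q))) + p * p / q := by
  have hp0 : (0:ℝ) < p := by linarith
  have hp1 : (0:ℝ) < p - 1 := by linarith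
  have hq0 : (0:ℝ) < q := by rw [hq]; positivity
  have hpq : 1/p + 1/q = 1 := by rw [hq]; field_simp; ring
  have hq1 : (1:ℝ) < q := by rw [hq, lt_div_iff₀ hp1]; linarith
  have hs0 : (0:ℝ) < s := by linarith
  have hrp0 : (0:ℝ) ≤ 1/p := by positivity
  have hrp1 : 1/p ≤ 1 := by rw [div_le_one hp0]; linarith
  have hrq0 : (0:ℝ) ≤ 1/q := by positivity
  have hrq1 : 1/q ≤ 1 := by rw [div_le_one hq0]; linarith
  set M : ℝ := (m:ℝ) + s + 1 with hM_def
  have hM0 : (0:ℝ) < M := by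
    have : (0:ℝ) ≤ (m:ℝ) := Nat.cast_nonneg m
    simp only [hM_def]; linarith
  have hcast : ∀ n : ℕ, (0:ℝ) < (n:ℝ) + s := by
    intro n
    have : (0:ℝ) ≤ (n:ℝ) := Nat.cast_nonneg n
    linarith
  -- rewrite each term
  have hterm : ∀ n ∈ Finset.range (m+1),
      (1 / ((n : ℝ) + s)) * ((s / ((n : ℝ) + s)) ^ (1 / q) +
          (p / q) * (M / ((n : ℝ) + s)) ^ (-(1 / p)))
      = s ^ (1/q) * (((n:ℝ)+s) ^ (-(1+1/q)))
        + (p/q) * (M ^ (-(1/p)) * ((((n:ℝ)+s) ^ (1/p)) / ((n:ℝ)+s))) := by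
    intro n _
    have ha0 := hcast n
    have e1 : (s / ((n:ℝ)+s)) ^ (1/q) = s^(1/q) / (((n:ℝ)+s)^(1/q)) :=
      div_rpow hs0.le ha0.le _
    have e2 : (M / ((n:ℝ)+s)) ^ (-(1/p)) = M^(-(1/p)) / (((n:ℝ)+s)^(-(1/p))) :=
      div_rpow hM0.le ha0.le _
    have e3 : ((n:ℝ)+s) ^ (-(1+1/q)) = (((n:ℝ)+s) * (((n:ℝ)+s)^(1/q)))⁻¹ := by
      rw [rpow_neg ha0.le, rpow_add ha0, rpow_one]
    have e4 : ((n:ℝ)+s) ^ (-(1/p)) = (((n:ℝ)+s)^(1/p))⁻¹ := rpow_neg ha0.le _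
    rw [e1, e2, e3, e4]
    have h1 : (0:ℝ) < ((n:ℝ)+s)^(1/q) := rpow_pos_of_pos ha0 _
    have h2 : (0:ℝ) < ((n:ℝ)+s)^(1/p) := rpow_pos_of_pos ha0 _
    field_simp
  rw [Finset.sum_congr rfl hterm, Finset.sum_add_distrib]
  -- first block
  have hA : ∑ n ∈ Finset.range (m+1), s ^ (1/q) * (((n:ℝ)+s) ^ (-(1+1/q)))
      ≤ s ^ (1/q) * (s ^ (-(1+1/q)) + q * s ^ (-(1/q))) := by
    rw [← Finset.mul_sum]
    apply mul_le_mul_of_nonneg_left _ (rpow_nonneg hs0.le _)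
    have hsplit0 : ∑ n ∈ Finset.range (m+1), (((n:ℝ)+s) ^ (-(1+1/q)))
        = s ^ (-(1+1/q)) + ∑ n ∈ Finset.Ico 1 (m+1), (((n:ℝ)+s) ^ (-(1+1/q))) := by
      rw [Finset.range_eq_Ico,
        ← Finset.sum_Ico_consecutive _ (Nat.zero_le 1) (by omega : 1 ≤ m+1)]
      congr 1
      norm_num
    rw [hsplit0]
    have hT : ∑ n ∈ Finset.Ico 1 (m+1), (((n:ℝ)+s) ^ (-(1+1/q))) ≤ q * s ^ (-(1/q)) := by
      have H := sum_le_telescope (fun n => (((n:ℝ)+s) ^ (-(1+1/q))))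
        (fun k => -(q * (((k:ℝ)-1+s)^(-(1/q))))) 1 ?_ (m+1) (by omega)
      · push_cast at H
        have hmz : (0:ℝ) ≤ ((m:ℝ)+s) ^ (-(1/q)) := rpow_nonneg (by linarith [hcast m]) _
        have e5 : (1:ℝ) - 1 + s = s := by ring
        have e6 : (m:ℝ) + 1 - 1 + s = (m:ℝ) + s := by ring
        rw [e5, e6] at H
        have hmz' : (0:ℝ) ≤ q * ((m:ℝ)+s)^(-(1/q)) := mul_nonneg hq0.le hmz
        linarith
      · intro k hk
        have hk1 : (1:ℝ) ≤ (k:ℝ) := by exact_mod_cast hk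
        have hc2 : (2:ℝ) ≤ (k:ℝ) + s := by linarith
        have hc0 : (0:ℝ) < (k:ℝ) + s := by linarith
        have hb := bern_neg_down hrq0 hrq1 hc2
        have h1 := mul_le_mul_of_nonneg_left hb hq0.le
        have h3 : q * (((k:ℝ)+s)^(-(1/q)) + (1/q) * (((k:ℝ)+s)^(-(1/q)-1)))
            = q * (((k:ℝ)+s)^(-(1/q))) + ((k:ℝ)+s)^(-(1/q)-1) := by
          field_simp
        rw [h3] at h1
        have hexp : -(1+1/q) = -(1/q)-1 := by ring
        rw [hexp]
        have e7 : ((k:ℝ)+1) - 1 + s = (k:ℝ) + s := by ring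
        push_cast
        rw [e7]
        have e8 : (k:ℝ) - 1 + s = ((k:ℝ)+s) - 1 := by ring
        rw [e8]
        linarith
    linarith
  -- second block
  have hB : ∑ n ∈ Finset.range (m+1),
        (p/q) * (M ^ (-(1/p)) * ((((n:ℝ)+s) ^ (1/p)) / ((n:ℝ)+s)))
      ≤ p * p / q := by
    rw [← Finset.mul_sum, ← Finset.mul_sum]
    have hT : ∑ n ∈ Finset.range (m+1), ((((n:ℝ)+s) ^ (1/p)) / ((n:ℝ)+s))
        ≤ p * M ^ (1/p) := by
      have H := sum_le_telescope (fun n => ((((n:ℝ)+s) ^ (1/p)) / ((n:ℝ)+s)))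
        (fun k => p * (((k:ℝ)-1+s)^(1/p))) 0 ?_ (m+1) (by omega)
      · rw [Finset.range_eq_Ico]
        push_cast at H
        have e6 : (m:ℝ) + 1 - 1 + s = (m:ℝ) + s := by ring
        have e5 : (0:ℝ) - 1 + s = s - 1 := by ring
        rw [e5, e6] at H
        have h9 : (0:ℝ) ≤ (s-1) ^ (1/p) := rpow_nonneg (by linarith) _
        have h10 : ((m:ℝ) + s) ^ (1/p) ≤ M ^ (1/p) := by
          apply rpow_le_rpow (by linarith [hcast m]) _ hrp0
          simp only [hM_def]; linarith
        have h11 := mul_le_mul_of_nonneg_left h10 hp0.le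
        have h12 : (0:ℝ) ≤ p * (s-1)^(1/p) := mul_nonneg hp0.le h9
        linarith
      · intro k _
        have hc1 : (1:ℝ) ≤ (k:ℝ) + s := by
          have : (0:ℝ) ≤ (k:ℝ) := Nat.cast_nonneg k
          linarith
        have hc0 : (0:ℝ) < (k:ℝ) + s := by linarith
        have hb := bern_down hrp0 hrp1 hc1
        have h1 := mul_le_mul_of_nonneg_left hb hp0.le
        have h3 : p * (((k:ℝ)+s)^(1/p) - (1/p) * (((k:ℝ)+s)^(1/p-1)))
            = p * (((k:ℝ)+s)^(1/p)) - ((k:ℝ)+s)^(1/p-1) := by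
          field_simp
        rw [h3] at h1
        have hdiv : ((k:ℝ)+s)^(1/p-1) = ((k:ℝ)+s)^(1/p) / ((k:ℝ)+s) :=
          rpow_sub_one hc0.ne' _
        rw [hdiv] at h1
        push_cast
        have e7 : ((k:ℝ)+1) - 1 + s = (k:ℝ) + s := by ring
        rw [e7]
        have e8 : (k:ℝ) - 1 + s = ((k:ℝ)+s) - 1 := by ring
        rw [e8]
        linarith
    have hMM : M ^ (-(1/p)) * (p * M ^ (1/p)) = p := by
      rw [rpow_neg hM0.le]
      field_simp
    calc (p/q) * (M ^ (-(1/p)) * ∑ n ∈ Finset.range (m+1), ((((n:ℝ)+s) ^ (1/p)) / ((n:ℝ)+s)))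
        ≤ (p/q) * (M ^ (-(1/p)) * (p * M ^ (1/p))) := by
          apply mul_le_mul_of_nonneg_left _ (by positivity)
          exact mul_le_mul_of_nonneg_left hT (rpow_nonneg hM0.le _)
      _ = (p/q) * p := by rw [hMM]
      _ = p * p / q := by ring
  linarith

set_option maxHeartbeats 2000000 in
/-- For `s ≥ 1`, `1 < p < ∞`, `q = p/(p−1)` and the truncated test sequences
`x_m = ((n+s)^{−1/p})_{n ≤ m}`:
`‖A_s x_m‖_p^p ≥ (pq)^p ∑_{n=0}^m (1/(n+s))(1 − (1/p)(s/(n+s))^{1/q} − (1/q)((m+s+1)/(n+s))^{−1/p})^p`,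
and the error terms
`(pq)^p ∑_{n=0}^m (1/(n+s))((s/(n+s))^{1/q} + (p/q)((m+s+1)/(n+s))^{−1/p})`
are bounded by a constant independent of `m`. -/
theorem As_pnorm_lower_test (s p q : ℝ) (hs : 1 ≤ s) (hp : 1 < p)
    (hq : q = p / (p - 1))
    (X : ℕ → ℕ → ℝ)
    (hX : ∀ m n : ℕ, X m n = if n ≤ m then ((n : ℝ) + s) ^ (-(1 / p)) else 0) :
    (∀ m : ℕ,
      ∑' n : ℕ, |∑' j : ℕ, X m j / ((max n j : ℝ) + s)| ^ p ≥
        (p * q) ^ p * ∑ n ∈ Finset.range (m + 1), (1 / ((n : ℝ) + s)) *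
          (1 - (1 / p) * (s / ((n : ℝ) + s)) ^ (1 / q) -
            (1 / q) * (((m : ℝ) + s + 1) / ((n : ℝ) + s)) ^ (-(1 / p))) ^ p) ∧
    ∃ c : ℝ, ∀ m : ℕ,
      (p * q) ^ p * ∑ n ∈ Finset.range (m + 1), (1 / ((n : ℝ) + s)) *
          ((s / ((n : ℝ) + s)) ^ (1 / q) +
            (p / q) * (((m : ℝ) + s + 1) / ((n : ℝ) + s)) ^ (-(1 / p))) ≤ c := by
  have hp0 : (0:ℝ) < p := by linarith
  have hs0 : (0:ℝ) < s := by linarith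
  have hp1' : (0:ℝ) < p - 1 := by linarith
  have hq0 : (0:ℝ) < q := by rw [hq]; exact div_pos hp0 hp1'
  have hcast : ∀ n : ℕ, (0:ℝ) < (n:ℝ) + s := by
    intro n
    have : (0:ℝ) ≤ (n:ℝ) := Nat.cast_nonneg n
    linarith
  constructor
  · intro m
    rw [ge_iff_le]
    -- the inner tsum is a finite sum
    have hconv : ∀ n : ℕ, (∑' j : ℕ, X m j / ((max n j : ℝ) + s))
        = ∑ j ∈ Finset.range (m+1),
            ((j:ℝ)+s)^(-(1/p)) / (((max n j : ℕ):ℝ)+s) := by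
      intro n
      rw [tsum_eq_sum (s := Finset.range (m+1)) ?_]
      · apply Finset.sum_congr rfl
        intro j hj
        have hj' : j ≤ m := by
          have := Finset.mem_range.1 hj; omega
        rw [hX, if_pos hj', Nat.cast_max]
      · intro j hj
        have hj' : ¬ j ≤ m := by
          have := Finset.mem_range.not.1 hj; omega
        rw [hX, if_neg hj', zero_div]
    -- summability of the outer sequence
    set C : ℝ := ∑ j ∈ Finset.range (m+1), ((j:ℝ)+s)^(-(1/p)) with hC_def
    have hC0 : 0 ≤ C := Finset.sum_nonneg fun j _ => rpow_nonneg (hcast j).le _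
    have hGnn : ∀ n : ℕ, 0 ≤ ∑ j ∈ Finset.range (m+1),
        ((j:ℝ)+s)^(-(1/p)) / (((max n j : ℕ):ℝ)+s) := by
      intro n
      apply Finset.sum_nonneg
      intro j _
      exact div_nonneg (rpow_nonneg (hcast j).le _) (by
        have : (0:ℝ) ≤ ((max n j : ℕ):ℝ) := Nat.cast_nonneg _
        linarith)
    have hGle : ∀ n : ℕ, (∑ j ∈ Finset.range (m+1),
        ((j:ℝ)+s)^(-(1/p)) / (((max n j : ℕ):ℝ)+s)) ≤ C / ((n:ℝ)+1) := by
      intro n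
      rw [hC_def, Finset.sum_div]
      apply Finset.sum_le_sum
      intro j _
      apply div_le_div_of_nonneg_left (rpow_nonneg (hcast j).le _) (by positivity)
      have h1 : (n:ℝ) ≤ ((max n j : ℕ):ℝ) := Nat.cast_le.2 (le_max_left n j)
      linarith
    have hbound : ∀ n : ℕ, |∑' j : ℕ, X m j / ((max n j : ℝ) + s)| ^ p
        ≤ C ^ p * (1/((n:ℝ)+1)^p) := by
      intro n
      rw [hconv n, abs_of_nonneg (hGnn n)]
      have h2 := rpow_le_rpow (hGnn n) (hGle n) hp0.le
      apply le_trans h2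
      rw [div_rpow hC0 (by positivity : (0:ℝ) ≤ (n:ℝ)+1)]
      rw [div_eq_mul_inv, one_div]
    have hsummable : Summable (fun n : ℕ => |∑' j : ℕ, X m j / ((max n j : ℝ) + s)| ^ p) := by
      apply Summable.of_nonneg_of_le (fun n => rpow_nonneg (abs_nonneg _) _) hbound
      apply Summable.mul_left
      have h := Real.summable_one_div_nat_rpow.2 hp
      have h2 := (summable_nat_add_iff 1).2 h
      have h3 : ∀ n : ℕ, (1:ℝ) / ((n+1:ℕ):ℝ)^p = 1/((n:ℝ)+1)^p := by
        intro n; push_cast; ring_nf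
      simpa [h3] using h2
    -- compare with the finite sum
    rw [Finset.mul_sum]
    calc ∑ n ∈ Finset.range (m+1), (p*q)^p * ((1 / ((n : ℝ) + s)) *
          (1 - (1 / p) * (s / ((n : ℝ) + s)) ^ (1 / q) -
            (1 / q) * (((m : ℝ) + s + 1) / ((n : ℝ) + s)) ^ (-(1 / p))) ^ p)
        ≤ ∑ n ∈ Finset.range (m+1), |∑' j : ℕ, X m j / ((max n j : ℝ) + s)| ^ p := by
          apply Finset.sum_le_sum
          intro n hn
          rw [hconv n]
          exact key_term s p q hs hp hq m n (by
            have := Finset.mem_range.1 hn; omega)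
      _ ≤ ∑' n : ℕ, |∑' j : ℕ, X m j / ((max n j : ℝ) + s)| ^ p :=
          Summable.sum_le_tsum _ (fun i _ => rpow_nonneg (abs_nonneg _) _) hsummable
  · refine ⟨(p*q)^p * (s ^ (1/q) * (s ^ (-(1+1/q)) + q * s ^ (-(1/q))) + p * p / q),
      fun m => ?_⟩
    exact mul_le_mul_of_nonneg_left (part2_bound s p q hs hp hq m)
      (rpow_nonneg (by positivity) _)
end
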